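/- Let G=(V,E) be a finite simple undirected graph with β_e > 1 for all e ∈ E and 0 < λ_v ≤ 1 for all v ∈ V, and let the weighted random cluster model have edge parameters p_e = 1 − 1/β_e and vertex weights λ. Let P_SW^Ising = P_{I→R}·P_{R→I} be the Swendsen-Wang dynamics for the Ising model, and let P_EF be the lazy edge-flipping (Metropolis) dynamics for π_wrc. Then Gap(P_SW^Ising) ≥ Gap(P_EF)/3. -/

import Mathlib

open Finset
open scoped Classical

noncomputable section

variable {V : Type*} [Fintype V] [DecidableEq V]

/-- The vertex set of the connected component of `v` in the graph `(V, S)`. -/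
def compOf (S : Finset (Sym2 V)) (v : V) : Finset V :=
  Finset.univ.filter fun u => (SimpleGraph.fromEdgeSet (↑S : Set (Sym2 V))).Reachable v u

/-- `κ(V,S)`: the set of vertex sets of connected components of the graph `(V, S)`. -/
def kappa (S : Finset (Sym2 V)) : Finset (Finset V) :=
  Finset.univ.image (compOf S)

/-- `∏_{C ∈ κ(V,S)} (1 + ∏_{u ∈ C} λ_u)`. -/
def clusterProd (S : Finset (Sym2 V)) (lam : V → ℝ) : ℝ :=
  ∏ C ∈ kappa S, (1 + ∏ u ∈ C, lam u)

/-- Weight of an edge subset `S ⊆ E₀` in the weighted random cluster model. -/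
def wtWRC (E₀ : Finset (Sym2 V)) (q : Sym2 V → ℝ) (lam : V → ℝ) (S : Finset (Sym2 V)) : ℝ :=
  (∏ e ∈ S, q e) * (∏ f ∈ E₀ \ S, (1 - q f)) * clusterProd S lam

/-- Partition function of the weighted random cluster model. -/
def ZWRC (E₀ : Finset (Sym2 V)) (q : Sym2 V → ℝ) (lam : V → ℝ) : ℝ :=
  ∑ S ∈ E₀.powerset, wtWRC E₀ q lam S

/-- The weighted random cluster distribution. -/
def piWRC (E₀ : Finset (Sym2 V)) (q : Sym2 V → ℝ) (lam : V → ℝ) (S : Finset (Sym2 V)) : ℝ :=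
  wtWRC E₀ q lam S / ZWRC E₀ q lam

/-- The monochromatic edges of a spin configuration `σ`. -/
def monoEdges (E₀ : Finset (Sym2 V)) (σ : V → Bool) : Finset (Sym2 V) :=
  E₀.filter fun e => (e.map σ).IsDiag

/-- Weight of a spin configuration in the Ising model. -/
def wtIsing (E₀ : Finset (Sym2 V)) (β : Sym2 V → ℝ) (lam : V → ℝ) (σ : V → Bool) : ℝ :=
  (∏ e ∈ monoEdges E₀ σ, β e) * ∏ v : V, (if σ v then lam v else 1)

/-- Ising partition function. -/
def ZIsing (E₀ : Finset (Sym2 V)) (β : Sym2 V → ℝ) (lam : V → ℝ) : ℝ :=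
  ∑ σ : V → Bool, wtIsing E₀ β lam σ

/-- Ising Gibbs distribution. -/
def piIsing (E₀ : Finset (Sym2 V)) (β : Sym2 V → ℝ) (lam : V → ℝ) (σ : V → Bool) : ℝ :=
  wtIsing E₀ β lam σ / ZIsing E₀ β lam

/-- Vertices of odd degree in the graph `(V, S)`. -/
def oddVerts (S : Finset (Sym2 V)) : Finset V :=
  Finset.univ.filter fun v => Odd (S.filter fun e => v ∈ e).card

/-- Weight of an edge subset in the subgraph-world model. -/
def wtSG (E₀ : Finset (Sym2 V)) (p : Sym2 V → ℝ) (η : V → ℝ) (S : Finset (Sym2 V)) : ℝ :=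
  (∏ e ∈ S, p e) * (∏ f ∈ E₀ \ S, (1 - p f)) * ∏ v ∈ oddVerts S, η v

/-- Subgraph-world partition function. -/
def ZSG (E₀ : Finset (Sym2 V)) (p : Sym2 V → ℝ) (η : V → ℝ) : ℝ :=
  ∑ S ∈ E₀.powerset, wtSG E₀ p η S

/-- Subgraph-world distribution. -/
def piSG (E₀ : Finset (Sym2 V)) (p : Sym2 V → ℝ) (η : V → ℝ) (S : Finset (Sym2 V)) : ℝ :=
  wtSG E₀ p η S / ZSG E₀ p η

/-- The transformation `P_{I→R}` from Ising configurations to edge subsets. -/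
def PIR (E₀ : Finset (Sym2 V)) (β : Sym2 V → ℝ) (σ : V → Bool) (S : Finset (Sym2 V)) : ℝ :=
  if S ⊆ monoEdges E₀ σ then
    (∏ e ∈ S, (1 - (β e)⁻¹)) * ∏ f ∈ monoEdges E₀ σ \ S, (β f)⁻¹
  else 0

/-- The transformation `P_{R→I}` from edge subsets to Ising configurations. -/
def PRI (E₀ : Finset (Sym2 V)) (lam : V → ℝ) (S : Finset (Sym2 V)) (σ : V → Bool) : ℝ :=
  if S ⊆ monoEdges E₀ σ then
    ∏ C ∈ kappa S, ((∏ v ∈ C, if σ v then lam v else 1) / (1 + ∏ v ∈ C, lam v))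
  else 0

/-- Swendsen-Wang dynamics for the Ising model: `P_{I→R} ⬝ P_{R→I}`. -/
def PSWIsing (E₀ : Finset (Sym2 V)) (β : Sym2 V → ℝ) (lam : V → ℝ) (σ τ : V → Bool) : ℝ :=
  ∑ S ∈ E₀.powerset, PIR E₀ β σ S * PRI E₀ lam S τ

/-- Swendsen-Wang dynamics for the weighted random cluster model: `P_{R→I} ⬝ P_{I→R}`. -/
def PSWwrc (E₀ : Finset (Sym2 V)) (β : Sym2 V → ℝ) (lam : V → ℝ)
    (S S' : Finset (Sym2 V)) : ℝ :=
  ∑ σ : V → Bool, PRI E₀ lam S σ * PIR E₀ β σ S'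

/-- Lazy edge-flipping (Metropolis) dynamics for a distribution `pi` on subsets of `E₀`. -/
def PEF (E₀ : Finset (Sym2 V)) (pi : Finset (Sym2 V) → ℝ) (x y : Finset (Sym2 V)) : ℝ :=
  if x = y then
    1 - (1 / (2 * (E₀.card : ℝ))) * ∑ e ∈ E₀, min 1 (pi (symmDiff x {e}) / pi x)
  else if (symmDiff x y).card = 1 then
    (1 / (2 * (E₀.card : ℝ))) * min 1 (pi y / pi x)
  else 0

/-- Variance of `f` with respect to a distribution `pi` supported on `states`. -/
def varOn {α : Type*} (states : Finset α) (pi f : α → ℝ) : ℝ :=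
  (∑ x ∈ states, pi x * f x ^ 2) - (∑ x ∈ states, pi x * f x) ^ 2

/-- Dirichlet form of a Markov kernel `P` with stationary distribution `pi` on `states`. -/
def dirichletOn {α : Type*} (states : Finset α) (pi : α → ℝ) (P : α → α → ℝ) (f : α → ℝ) : ℝ :=
  ∑ x ∈ states, pi x * f x * (f x - ∑ y ∈ states, P x y * f y)

/-- Spectral gap of a reversible Markov kernel `P` with stationary distribution `pi`. -/
def gapOn {α : Type*} (states : Finset α) (pi : α → ℝ) (P : α → α → ℝ) : ℝ :=
  sInf ((fun f : α → ℝ => dirichletOn states pi P f / varOn states pi f) ''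
    {f | varOn states pi f ≠ 0})

/-- Total variation distance between two distributions on `states`. -/
def dTV {α : Type*} (states : Finset α) (μ ν : α → ℝ) : ℝ :=
  (1 / 2) * ∑ z ∈ states, |μ z - ν z|

/-- `t`-step transition probabilities of the Markov kernel `P` on state space `states`. -/
def kpow {α : Type*} (states : Finset α) (P : α → α → ℝ) : ℕ → α → α → ℝ
  | 0 => fun x y => if x = y then 1 else 0
  | (t + 1) => fun x y => ∑ z ∈ states, P x z * kpow states P t z y


set_option linter.unusedSectionVars false
namespace SWProof

variable {V : Type*} [Fintype V] [DecidableEq V]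

/-! ### Components -/

lemma mem_compOf {S : Finset (Sym2 V)} {v u : V} :
    u ∈ compOf S v ↔ (SimpleGraph.fromEdgeSet (↑S : Set (Sym2 V))).Reachable v u := by
  simp [compOf]

lemma self_mem_compOf (S : Finset (Sym2 V)) (v : V) : v ∈ compOf S v :=
  mem_compOf.2 (SimpleGraph.Reachable.refl v)

lemma compOf_nonempty (S : Finset (Sym2 V)) (v : V) : (compOf S v).Nonempty :=
  ⟨v, self_mem_compOf S v⟩

lemma compOf_eq_of_reachable {S : Finset (Sym2 V)} {v u : V}
    (h : (SimpleGraph.fromEdgeSet (↑S : Set (Sym2 V))).Reachable v u) :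
    compOf S v = compOf S u := by
  ext w
  simp only [mem_compOf]
  exact ⟨fun hw => h.symm.trans hw, fun hw => h.trans hw⟩

lemma compOf_mem_kappa (S : Finset (Sym2 V)) (v : V) : compOf S v ∈ kappa S :=
  Finset.mem_image_of_mem _ (Finset.mem_univ v)

lemma mem_kappa {S : Finset (Sym2 V)} {C : Finset V} :
    C ∈ kappa S ↔ ∃ v, compOf S v = C := by
  simp [kappa]

lemma eq_compOf_of_mem {S : Finset (Sym2 V)} {C : Finset V} {v : V}
    (hC : C ∈ kappa S) (hv : v ∈ C) : C = compOf S v := by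
  obtain ⟨u, rfl⟩ := mem_kappa.1 hC
  exact compOf_eq_of_reachable (mem_compOf.1 hv)

lemma reachable_of_mem_compOf {S : Finset (Sym2 V)} {C : Finset V} {v u : V}
    (hC : C ∈ kappa S) (hv : v ∈ C) (hu : u ∈ C) :
    (SimpleGraph.fromEdgeSet (↑S : Set (Sym2 V))).Reachable v u := by
  obtain ⟨w, rfl⟩ := mem_kappa.1 hC
  exact (mem_compOf.1 hv).symm.trans (mem_compOf.1 hu)

lemma kappa_pairwiseDisjoint (S : Finset (Sym2 V)) :
    (↑(kappa S) : Set (Finset V)).PairwiseDisjoint id := by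
  intro C hC D hD hne
  rw [Finset.mem_coe] at hC hD
  simp only [Function.onFun, id]
  rw [Finset.disjoint_left]
  intro w hwC hwD
  exact hne ((eq_compOf_of_mem hC hwC).trans
    (eq_compOf_of_mem hD hwD).symm)

lemma biUnion_kappa (S : Finset (Sym2 V)) : (kappa S).biUnion id = Finset.univ := by
  ext v
  simp only [Finset.mem_biUnion, Finset.mem_univ, iff_true, id]
  exact ⟨compOf S v, compOf_mem_kappa S v, self_mem_compOf S v⟩

lemma prod_kappa (S : Finset (Sym2 V)) (h : V → ℝ) :
    ∏ C ∈ kappa S, ∏ v ∈ C, h v = ∏ v, h v := by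
  conv_rhs => rw [← biUnion_kappa S]
  rw [Finset.prod_biUnion (kappa_pairwiseDisjoint S)]
  rfl

/-! ### Spin constancy on components -/

lemma sigma_eq_of_reachable {S : Finset (Sym2 V)} {σ : V → Bool}
    (hmono : ∀ e ∈ S, (Sym2.map σ e).IsDiag) {x y : V}
    (h : (SimpleGraph.fromEdgeSet (↑S : Set (Sym2 V))).Reachable x y) :
    σ x = σ y := by
  obtain ⟨w⟩ := h
  induction w with
  | nil => rfl
  | cons hadj p ih =>
    rename_i a b c
    rw [SimpleGraph.fromEdgeSet_adj] at hadj
    have := hmono _ hadj.1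
    rw [Sym2.map_pair_eq, Sym2.mk_isDiag_iff] at this
    exact this.trans ih

lemma mono_of_const {S : Finset (Sym2 V)} {σ : V → Bool}
    (h : ∀ x y, (SimpleGraph.fromEdgeSet (↑S : Set (Sym2 V))).Reachable x y → σ x = σ y) :
    ∀ e ∈ S, (Sym2.map σ e).IsDiag := by
  intro e he
  induction e with
  | _ a b =>
    rw [Sym2.map_pair_eq, Sym2.mk_isDiag_iff]
    by_cases hab : a = b
    · rw [hab]
    · exact h a b (SimpleGraph.Adj.reachable (by rw [SimpleGraph.fromEdgeSet_adj]; exact ⟨he, hab⟩))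

lemma sigma_const_on_comp {S : Finset (Sym2 V)} {σ : V → Bool}
    (hmono : ∀ e ∈ S, (Sym2.map σ e).IsDiag) {C : Finset V} (hC : C ∈ kappa S)
    {v u : V} (hv : v ∈ C) (hu : u ∈ C) : σ v = σ u :=
  sigma_eq_of_reachable hmono (reachable_of_mem_compOf hC hv hu)

end SWProof
namespace SWProof

variable {V : Type*} [Fintype V] [DecidableEq V]

/-- A representative vertex of a component. -/
def repOf (S : Finset (Sym2 V)) (C : Finset V) (hC : C ∈ kappa S) : V :=
  (mem_kappa.1 hC).choose

lemma compOf_repOf (S : Finset (Sym2 V)) (C : Finset V) (hC : C ∈ kappa S) :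
    compOf S (repOf S C hC) = C :=
  (mem_kappa.1 hC).choose_spec

lemma repOf_mem (S : Finset (Sym2 V)) (C : Finset V) (hC : C ∈ kappa S) :
    repOf S C hC ∈ C := by
  have h := self_mem_compOf S (repOf S C hC)
  rwa [compOf_repOf S C hC] at h

lemma apply_pi_congr {S : Finset (Sym2 V)} (p : (a : Finset V) → a ∈ kappa S → Bool)
    {C D : Finset V} (h : C = D) (hC : C ∈ kappa S) (hD : D ∈ kappa S) :
    p C hC = p D hD := by subst h; rfl

/-- Sum over component-constant spin configurations factorizes. -/
lemma sum_colorings (S : Finset (Sym2 V)) (lam : V → ℝ) :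
    ∑ σ ∈ (Finset.univ : Finset (V → Bool)).filter
        (fun σ => ∀ e ∈ S, (Sym2.map σ e).IsDiag),
      ∏ v, (if σ v then lam v else 1)
    = ∏ C ∈ kappa S, (1 + ∏ v ∈ C, lam v) := by
  have hfac : ∀ C ∈ kappa S, (1 + ∏ v ∈ C, lam v)
      = ∑ b ∈ (Finset.univ : Finset Bool), (if b then ∏ v ∈ C, lam v else 1) := by
    intro C _
    simp [Fintype.sum_bool, add_comm]
  rw [Finset.prod_congr rfl hfac, Finset.prod_sum]
  refine Finset.sum_bij' (fun σ hσ => fun C hC => σ (repOf S C hC))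
    (fun p hp => fun v => p (compOf S v) (compOf_mem_kappa S v)) ?_ ?_ ?_ ?_ ?_
  · -- maps into pi set
    intro σ hσ
    simp [Finset.mem_pi]
  · -- maps into filter set
    intro p hp
    rw [Finset.mem_filter]
    refine ⟨Finset.mem_univ _, ?_⟩
    refine mono_of_const (fun x y hxy => ?_)
    exact apply_pi_congr p (compOf_eq_of_reachable hxy) _ _
  · -- left inverse
    intro σ hσ
    funext v
    dsimp only
    rw [Finset.mem_filter] at hσ
    exact sigma_const_on_comp hσ.2 (compOf_mem_kappa S v)
      (repOf_mem S (compOf S v) (compOf_mem_kappa S v)) (self_mem_compOf S v)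
  · -- right inverse
    intro p hp
    funext C hC
    dsimp only
    exact apply_pi_congr p (compOf_repOf S C hC) _ _
  · -- values agree
    intro σ hσ
    rw [Finset.mem_filter] at hσ
    rw [← prod_kappa S (fun v => if σ v then lam v else 1),
      ← Finset.prod_attach (kappa S) (fun C => ∏ v ∈ C, (if σ v then lam v else 1))]
    refine Finset.prod_congr rfl (fun C _ => ?_)
    by_cases hb : σ (repOf S C.1 C.2)
    · rw [if_pos hb]
      refine Finset.prod_congr rfl (fun v hv => ?_)
      rw [if_pos]
      rw [sigma_const_on_comp hσ.2 C.2 hv (repOf_mem _ _ _)]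
      exact hb
    · rw [if_neg hb]
      refine Finset.prod_eq_one (fun v hv => ?_)
      rw [if_neg]
      rw [sigma_const_on_comp hσ.2 C.2 hv (repOf_mem _ _ _)]
      exact hb

end SWProof
namespace SWProof

variable {V : Type*} [Fintype V] [DecidableEq V]

lemma clusterProd_pos {S : Finset (Sym2 V)} {lam : V → ℝ} (hlam : ∀ w, 0 < lam w) :
    0 < clusterProd S lam := by
  refine Finset.prod_pos (fun C _ => ?_)
  have : 0 < ∏ u ∈ C, lam u := Finset.prod_pos (fun u _ => hlam u)
  linarith

lemma reach_insert_iff {T : Finset (Sym2 V)} {u v : V} (huv : u ≠ v) {x y : V} :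
    (SimpleGraph.fromEdgeSet (↑(insert s(u,v) T) : Set (Sym2 V))).Reachable x y ↔
      ((SimpleGraph.fromEdgeSet (↑T : Set (Sym2 V))).Reachable x y ∨
        ((SimpleGraph.fromEdgeSet (↑T : Set (Sym2 V))).Reachable x u ∧
          (SimpleGraph.fromEdgeSet (↑T : Set (Sym2 V))).Reachable v y) ∨
        ((SimpleGraph.fromEdgeSet (↑T : Set (Sym2 V))).Reachable x v ∧
          (SimpleGraph.fromEdgeSet (↑T : Set (Sym2 V))).Reachable u y)) := by
  set GT := SimpleGraph.fromEdgeSet (↑T : Set (Sym2 V)) with hGT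
  have hmono : GT ≤ SimpleGraph.fromEdgeSet (↑(insert s(u,v) T) : Set (Sym2 V)) := by
    apply SimpleGraph.fromEdgeSet_mono
    rw [Finset.coe_insert]
    exact Set.subset_insert _ _
  have hedge : (SimpleGraph.fromEdgeSet (↑(insert s(u,v) T) : Set (Sym2 V))).Adj u v := by
    rw [SimpleGraph.fromEdgeSet_adj]
    exact ⟨by simp, huv⟩
  constructor
  · intro h
    obtain ⟨w⟩ := h
    induction w with
    | nil => exact Or.inl (SimpleGraph.Reachable.refl _)
    | cons hadj p ih =>
      rename_i a b c
      rw [SimpleGraph.fromEdgeSet_adj, Finset.coe_insert, Set.mem_insert_iff] at hadj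
      rcases hadj with ⟨heq | hmem, hne⟩
      · rcases Sym2.eq_iff.1 heq with ⟨rfl, rfl⟩ | ⟨rfl, rfl⟩
        · -- a = u, b = v
          rcases ih with h1 | ⟨h2, h3⟩ | ⟨h4, h5⟩
          · exact Or.inr (Or.inl ⟨SimpleGraph.Reachable.refl _, h1⟩)
          · exact Or.inl (h2.symm.trans h3)
          · exact Or.inl h5
        · -- a = v, b = u
          rcases ih with h1 | ⟨h2, h3⟩ | ⟨h4, h5⟩
          · exact Or.inr (Or.inr ⟨SimpleGraph.Reachable.refl _, h1⟩)
          · exact Or.inl h3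
          · exact Or.inl (h4.symm.trans h5)
      · have hab : GT.Reachable a b :=
          SimpleGraph.Adj.reachable (by rw [hGT, SimpleGraph.fromEdgeSet_adj]; exact ⟨hmem, hne⟩)
        rcases ih with h1 | ⟨h2, h3⟩ | ⟨h4, h5⟩
        · exact Or.inl (hab.trans h1)
        · exact Or.inr (Or.inl ⟨hab.trans h2, h3⟩)
        · exact Or.inr (Or.inr ⟨hab.trans h4, h5⟩)
  · intro h
    have hR : (SimpleGraph.fromEdgeSet (↑(insert s(u,v) T) : Set (Sym2 V))).Reachable u v :=
      hedge.reachable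
    rcases h with h1 | ⟨h2, h3⟩ | ⟨h4, h5⟩
    · exact h1.mono hmono
    · exact ((h2.mono hmono).trans hR).trans (h3.mono hmono)
    · exact ((h4.mono hmono).trans hR.symm).trans (h5.mono hmono)

lemma clusterProd_le_insert {T : Finset (Sym2 V)} {e : Sym2 V} (he : ¬e.IsDiag)
    {lam : V → ℝ} (hlam : ∀ w, 0 < lam w ∧ lam w ≤ 1) :
    clusterProd T lam ≤ 2 * clusterProd (insert e T) lam := by
  induction e with
  | _ u v =>
  have huv : u ≠ v := by rwa [Sym2.mk_isDiag_iff] at he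
  set GT := SimpleGraph.fromEdgeSet (↑T : Set (Sym2 V)) with hGT
  set S' := insert s(u,v) T with hS'
  by_cases hR : GT.Reachable u v
  · -- no merge: kappa unchanged
    have hcomp : ∀ w, compOf S' w = compOf T w := by
      intro w
      ext x
      simp only [mem_compOf]
      rw [reach_insert_iff huv]
      constructor
      · rintro (h1 | ⟨h2, h3⟩ | ⟨h4, h5⟩)
        · exact h1
        · exact (h2.trans hR).trans h3
        · exact (h4.trans hR.symm).trans h5
      · exact Or.inl
    have : kappa S' = kappa T := by
      unfold kappa
      exact Finset.image_congr (fun w _ => hcomp w)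
    rw [clusterProd, clusterProd, this]
    have := clusterProd_pos (S := T) (lam := lam) (fun w => (hlam w).1)
    rw [clusterProd] at this
    linarith
  · -- merge case
    set A := compOf T u with hA
    set B := compOf T v with hB
    have hAk : A ∈ kappa T := compOf_mem_kappa T u
    have hBk : B ∈ kappa T := compOf_mem_kappa T v
    have hvB : v ∈ B := self_mem_compOf T v
    have huA : u ∈ A := self_mem_compOf T u
    have hAB : A ≠ B := by
      intro h
      have hv : v ∈ compOf T u := by rw [hA] at h; rw [h]; exact hvB
      exact hR (mem_compOf.1 hv)
    -- components of S' for vertices not connected to u or v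
    have hcomp : ∀ w, ¬GT.Reachable w u → ¬GT.Reachable w v → compOf S' w = compOf T w := by
      intro w hwu hwv
      ext x
      simp only [mem_compOf]
      rw [reach_insert_iff huv]
      constructor
      · rintro (h1 | ⟨h2, h3⟩ | ⟨h4, h5⟩)
        · exact h1
        · exact absurd h2 hwu
        · exact absurd h4 hwv
      · exact Or.inl
    have hcompu : compOf S' u = A ∪ B := by
      ext x
      simp only [Finset.mem_union, mem_compOf, hA, hB]
      rw [reach_insert_iff huv]
      constructor
      · rintro (h1 | ⟨h2, h3⟩ | ⟨h4, h5⟩)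
        · exact Or.inl h1
        · exact Or.inr h3
        · exact absurd h4 hR
      · rintro (h | h)
        · exact Or.inl h
        · exact Or.inr (Or.inl ⟨SimpleGraph.Reachable.refl _, h⟩)
    have hABk : A ∪ B ∈ kappa S' := hcompu ▸ compOf_mem_kappa S' u
    set R : Finset (Finset V) := ((kappa T).erase A).erase B with hRdef
    have claim2 : (kappa S').erase (A ∪ B) = R := by
      ext C
      simp only [hRdef, Finset.mem_erase]
      constructor
      · rintro ⟨hne, hCk⟩
        obtain ⟨w, rfl⟩ := mem_kappa.1 hCk
        have hwu : ¬GT.Reachable w u := by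
          intro h
          have : compOf S' w = compOf S' u :=
            compOf_eq_of_reachable ((reach_insert_iff huv).2 (Or.inl h))
          exact hne (this.trans hcompu)
        have hwv : ¬GT.Reachable w v := by
          intro h
          have : compOf S' w = compOf S' u :=
            compOf_eq_of_reachable ((reach_insert_iff huv).2
              (Or.inr (Or.inr ⟨h, SimpleGraph.Reachable.refl _⟩)))
          exact hne (this.trans hcompu)
        rw [hcomp w hwu hwv]
        refine ⟨?_, ?_, compOf_mem_kappa T w⟩
        · intro h
          exact hwv (mem_compOf.1 (h.symm ▸ hvB))
        · intro h
          exact hwu (mem_compOf.1 (h.symm ▸ huA))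
      · rintro ⟨hCB, hCA, hCk⟩
        obtain ⟨w, rfl⟩ := mem_kappa.1 hCk
        have hwu : ¬GT.Reachable w u := by
          intro h
          exact hCA (compOf_eq_of_reachable h)
        have hwv : ¬GT.Reachable w v := by
          intro h
          exact hCB (compOf_eq_of_reachable h)
        refine ⟨?_, ?_⟩
        · intro h
          have : u ∈ compOf T w := h ▸ Finset.mem_union_left _ huA
          exact hwu (mem_compOf.1 this)
        · rw [← hcomp w hwu hwv]
          exact compOf_mem_kappa S' w
    have hkS' : kappa S' = insert (A ∪ B) R := by
      rw [← claim2, Finset.insert_erase hABk]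
    have hBmem : B ∈ (kappa T).erase A := Finset.mem_erase.2 ⟨hAB.symm, hBk⟩
    have hkT : kappa T = insert A (insert B R) := by
      rw [hRdef, Finset.insert_erase hBmem, Finset.insert_erase hAk]
    have hAnotin : A ∉ insert B R := by
      simp only [Finset.mem_insert, hRdef, Finset.mem_erase]
      rintro (h | ⟨h1, h2, h3⟩)
      · exact hAB h
      · exact h2 rfl
    have hBnotin : B ∉ R := by
      simp only [hRdef, Finset.mem_erase]
      rintro ⟨h1, _⟩
      exact h1 rfl
    have hABnotin : A ∪ B ∉ R := by
      simp only [hRdef, Finset.mem_erase]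
      rintro ⟨h1, h2, h3⟩
      have : A ∪ B = compOf T u := by
        refine eq_compOf_of_mem h3 (Finset.mem_union_left _ huA)
      exact hR (mem_compOf.1 (this ▸ (Finset.mem_union_right _ hvB : v ∈ A ∪ B)))
    have hdisj : Disjoint A B := by
      have := kappa_pairwiseDisjoint T (Finset.mem_coe.2 hAk) (Finset.mem_coe.2 hBk) hAB
      simpa [Function.onFun] using this
    -- products
    set pA := ∏ w ∈ A, lam w with hpA
    set pB := ∏ w ∈ B, lam w with hpB
    set P := ∏ C ∈ R, (1 + ∏ w ∈ C, lam w) with hP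
    have hprodT : clusterProd T lam = (1 + pA) * ((1 + pB) * P) := by
      rw [clusterProd, hkT, Finset.prod_insert hAnotin, Finset.prod_insert hBnotin]
    have hprodS' : clusterProd S' lam = (1 + pA * pB) * P := by
      rw [clusterProd, hkS', Finset.prod_insert hABnotin, Finset.prod_union hdisj]
    have hPpos : 0 < P := by
      refine Finset.prod_pos (fun C _ => ?_)
      have : 0 < ∏ w ∈ C, lam w := Finset.prod_pos (fun w _ => (hlam w).1)
      linarith
    have hpA1 : pA ≤ 1 := Finset.prod_le_one (fun w _ => (hlam w).1.le) (fun w _ => (hlam w).2)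
    have hpB1 : pB ≤ 1 := Finset.prod_le_one (fun w _ => (hlam w).1.le) (fun w _ => (hlam w).2)
    have hpA0 : 0 < pA := Finset.prod_pos (fun w _ => (hlam w).1)
    have hpB0 : 0 < pB := Finset.prod_pos (fun w _ => (hlam w).1)
    rw [hprodT, hprodS']
    nlinarith [mul_pos hpA0 hpB0, mul_nonneg (sub_nonneg.2 hpA1) (sub_nonneg.2 hpB1)]

end SWProof
namespace SWProof

variable {V : Type*} [Fintype V] [DecidableEq V]

section Model

variable (E₀ : Finset (Sym2 V)) (β : Sym2 V → ℝ) (lam : V → ℝ)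

lemma monoEdges_subset (σ : V → Bool) : monoEdges E₀ σ ⊆ E₀ := Finset.filter_subset _ _

lemma subset_monoEdges_iff {S : Finset (Sym2 V)} (hS : S ⊆ E₀) (σ : V → Bool) :
    S ⊆ monoEdges E₀ σ ↔ ∀ e ∈ S, (Sym2.map σ e).IsDiag := by
  constructor
  · intro h e he
    exact (Finset.mem_filter.1 (h he)).2
  · intro h e he
    exact Finset.mem_filter.2 ⟨hS he, h e he⟩

lemma sum_PIR (σ : V → Bool) :
    ∑ S ∈ E₀.powerset, PIR E₀ β σ S = 1 := by
  unfold PIR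
  rw [← Finset.sum_filter]
  have hfil : E₀.powerset.filter (fun S => S ⊆ monoEdges E₀ σ) = (monoEdges E₀ σ).powerset := by
    ext S
    simp only [Finset.mem_filter, Finset.mem_powerset]
    exact ⟨fun h => h.2, fun h => ⟨h.trans (monoEdges_subset E₀ σ), h⟩⟩
  rw [hfil, ← Finset.prod_add]
  refine Finset.prod_eq_one (fun e he => ?_)
  ring

lemma sum_PRI (hlam : ∀ v, 0 < lam v ∧ lam v ≤ 1) {S : Finset (Sym2 V)} (hS : S ⊆ E₀) :
    ∑ σ : V → Bool, PRI E₀ lam S σ = 1 := by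
  unfold PRI
  rw [← Finset.sum_filter]
  have hfil : (Finset.univ : Finset (V → Bool)).filter (fun σ => S ⊆ monoEdges E₀ σ)
      = Finset.univ.filter (fun σ => ∀ e ∈ S, (Sym2.map σ e).IsDiag) := by
    refine Finset.filter_congr (fun σ _ => ?_)
    simp only [subset_monoEdges_iff E₀ hS σ]
  have hD : (0:ℝ) < ∏ C ∈ kappa S, (1 + ∏ v ∈ C, lam v) := by
    refine Finset.prod_pos (fun C _ => ?_)
    have : 0 < ∏ u ∈ C, lam u := Finset.prod_pos (fun u _ => (hlam u).1)
    linarith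
  rw [hfil]
  have hk : ∀ σ : V → Bool, ∏ C ∈ kappa S,
      ((∏ v ∈ C, if σ v then lam v else 1) / (1 + ∏ v ∈ C, lam v))
      = (∏ v, if σ v then lam v else 1) / (∏ C ∈ kappa S, (1 + ∏ v ∈ C, lam v)) := by
    intro σ
    rw [Finset.prod_div_distrib, prod_kappa]
  simp only [hk]
  rw [← Finset.sum_div, sum_colorings S lam, div_self (ne_of_gt hD)]

lemma wtWRC_pos (hβ : ∀ e ∈ E₀, 1 < β e) (hlam : ∀ v, 0 < lam v ∧ lam v ≤ 1)
    {S : Finset (Sym2 V)} (hS : S ⊆ E₀) :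
    0 < wtWRC E₀ (fun e => 1 - (β e)⁻¹) lam S := by
  unfold wtWRC
  have h1 : 0 < ∏ e ∈ S, (1 - (β e)⁻¹) := by
    refine Finset.prod_pos (fun e he => ?_)
    have hb := hβ e (hS he)
    have : (β e)⁻¹ < 1 := by
      rw [inv_lt_one_iff₀]; right; exact hb
    linarith
  have h2 : 0 < ∏ f ∈ E₀ \ S, (1 - (1 - (β f)⁻¹)) := by
    refine Finset.prod_pos (fun f hf => ?_)
    have hb := hβ f (Finset.mem_sdiff.1 hf).1
    have : 0 < (β f)⁻¹ := inv_pos.2 (by linarith)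
    linarith
  exact mul_pos (mul_pos h1 h2) (clusterProd_pos (fun w => (hlam w).1))

lemma ZWRC_pos (hβ : ∀ e ∈ E₀, 1 < β e) (hlam : ∀ v, 0 < lam v ∧ lam v ≤ 1) :
    0 < ZWRC E₀ (fun e => 1 - (β e)⁻¹) lam := by
  refine Finset.sum_pos (fun S hS => wtWRC_pos E₀ β lam hβ hlam (Finset.mem_powerset.1 hS)) ?_
  exact ⟨∅, Finset.mem_powerset.2 (Finset.empty_subset _)⟩

lemma wtIsing_pos (hβ : ∀ e ∈ E₀, 1 < β e) (hlam : ∀ v, 0 < lam v ∧ lam v ≤ 1) (σ : V → Bool) : 0 < wtIsing E₀ β lam σ := by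
  unfold wtIsing
  refine mul_pos (Finset.prod_pos (fun e he => ?_)) (Finset.prod_pos (fun v _ => ?_))
  · have := hβ e (monoEdges_subset E₀ σ he); linarith
  · split
    · exact (hlam v).1
    · norm_num

lemma ZIsing_pos (hβ : ∀ e ∈ E₀, 1 < β e) (hlam : ∀ v, 0 < lam v ∧ lam v ≤ 1) :
    0 < ZIsing E₀ β lam :=
  Finset.sum_pos (fun σ _ => wtIsing_pos E₀ β lam hβ hlam σ) Finset.univ_nonempty

/-- Edwards–Sokal: joint weight identity. -/
lemma joint_identity (hβ : ∀ e ∈ E₀, 1 < β e) (hlam : ∀ v, 0 < lam v ∧ lam v ≤ 1)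
    {S : Finset (Sym2 V)} (hS : S ⊆ E₀) (σ : V → Bool) :
    wtIsing E₀ β lam σ * PIR E₀ β σ S
      = (∏ e ∈ E₀, β e) *
        (wtWRC E₀ (fun e => 1 - (β e)⁻¹) lam S * PRI E₀ lam S σ) := by
  by_cases hsub : S ⊆ monoEdges E₀ σ
  · unfold wtIsing PIR wtWRC PRI
    rw [if_pos hsub, if_pos hsub]
    have hD : (0:ℝ) < ∏ C ∈ kappa S, (1 + ∏ v ∈ C, lam v) := by
      refine Finset.prod_pos (fun C _ => ?_)
      have : 0 < ∏ u ∈ C, lam u := Finset.prod_pos (fun u _ => (hlam u).1)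
      linarith
    have hMsplit : ∏ e ∈ monoEdges E₀ σ, β e
        = (∏ e ∈ monoEdges E₀ σ \ S, β e) * ∏ e ∈ S, β e :=
      (Finset.prod_sdiff hsub).symm
    have hE₀split : ∏ e ∈ E₀, β e = (∏ e ∈ E₀ \ S, β e) * ∏ e ∈ S, β e :=
      (Finset.prod_sdiff (hS.trans (le_refl _))).symm
    have hSβ : ∀ e ∈ S, β e * (1 - (β e)⁻¹) = β e - 1 := by
      intro e he
      have hb := hβ e (hS he)
      field_simp
    have hne : ∀ e ∈ E₀, β e ≠ 0 := fun e he => by have := hβ e he; linarith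
    -- simplify the cluster part of the RHS
    have hcluster : (∏ C ∈ kappa S, (1 + ∏ u ∈ C, lam u)) *
        ∏ C ∈ kappa S, ((∏ v ∈ C, if σ v then lam v else 1) / (1 + ∏ v ∈ C, lam v))
        = ∏ v, (if σ v then lam v else 1) := by
      rw [Finset.prod_div_distrib, prod_kappa]
      field_simp
    -- reduce both sides to ∏_{e∈S}(β e - 1) * ∏_v ite
    have lhs_eq : ((∏ e ∈ monoEdges E₀ σ, β e) * ∏ v, (if σ v then lam v else 1)) *
        ((∏ e ∈ S, (1 - (β e)⁻¹)) * ∏ f ∈ monoEdges E₀ σ \ S, (β f)⁻¹)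
        = (∏ e ∈ S, (β e - 1)) * ∏ v, (if σ v then lam v else 1) := by
      rw [hMsplit]
      rw [show ((∏ e ∈ monoEdges E₀ σ \ S, β e) * ∏ e ∈ S, β e) *
            (∏ v, if σ v then lam v else 1) *
            ((∏ e ∈ S, (1 - (β e)⁻¹)) * ∏ f ∈ monoEdges E₀ σ \ S, (β f)⁻¹)
          = ((∏ e ∈ S, β e) * ∏ e ∈ S, (1 - (β e)⁻¹)) *
            ((∏ e ∈ monoEdges E₀ σ \ S, β e) * ∏ f ∈ monoEdges E₀ σ \ S, (β f)⁻¹) *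
            (∏ v, if σ v then lam v else 1) by ring]
      rw [← Finset.prod_mul_distrib, ← Finset.prod_mul_distrib,
        Finset.prod_congr rfl hSβ]
      rw [Finset.prod_congr rfl (fun e (he : e ∈ monoEdges E₀ σ \ S) =>
        mul_inv_cancel₀ (hne e (monoEdges_subset E₀ σ (Finset.mem_sdiff.1 he).1)))]
      rw [Finset.prod_const_one, mul_one]
    rw [lhs_eq]
    rw [show (∏ e ∈ E₀, β e) *
          ((∏ e ∈ S, (1 - (β e)⁻¹)) * (∏ f ∈ E₀ \ S, (1 - (1 - (β f)⁻¹))) *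
              (clusterProd S lam) *
            ∏ C ∈ kappa S, ((∏ v ∈ C, if σ v then lam v else 1) / (1 + ∏ v ∈ C, lam v)))
        = (∏ e ∈ E₀, β e) * ((∏ e ∈ S, (1 - (β e)⁻¹)) * (∏ f ∈ E₀ \ S, (1 - (1 - (β f)⁻¹)))) *
          ((clusterProd S lam) *
            ∏ C ∈ kappa S, ((∏ v ∈ C, if σ v then lam v else 1) / (1 + ∏ v ∈ C, lam v))) by ring]
    rw [show clusterProd S lam = ∏ C ∈ kappa S, (1 + ∏ u ∈ C, lam u) from rfl, hcluster]
    rw [hE₀split]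
    rw [show ((∏ e ∈ E₀ \ S, β e) * ∏ e ∈ S, β e) *
          ((∏ e ∈ S, (1 - (β e)⁻¹)) * ∏ f ∈ E₀ \ S, (1 - (1 - (β f)⁻¹)))
        = ((∏ e ∈ S, β e) * ∏ e ∈ S, (1 - (β e)⁻¹)) *
          ((∏ e ∈ E₀ \ S, β e) * ∏ f ∈ E₀ \ S, (1 - (1 - (β f)⁻¹))) by ring]
    rw [← Finset.prod_mul_distrib, ← Finset.prod_mul_distrib,
      Finset.prod_congr rfl hSβ]
    rw [Finset.prod_congr rfl (fun e (he : e ∈ E₀ \ S) => show β e * (1 - (1 - (β e)⁻¹)) = 1 by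
      rw [show (1 - (1 - (β e)⁻¹)) = (β e)⁻¹ by ring]
      exact mul_inv_cancel₀ (hne e (Finset.mem_sdiff.1 he).1))]
    rw [Finset.prod_const_one, mul_one]
  · unfold wtIsing PIR wtWRC PRI
    rw [if_neg hsub, if_neg hsub]
    ring

lemma ZIsing_eq (hβ : ∀ e ∈ E₀, 1 < β e) (hlam : ∀ v, 0 < lam v ∧ lam v ≤ 1) :
    ZIsing E₀ β lam = (∏ e ∈ E₀, β e) * ZWRC E₀ (fun e => 1 - (β e)⁻¹) lam := by
  unfold ZIsing ZWRC
  calc ∑ σ : V → Bool, wtIsing E₀ β lam σ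
      = ∑ σ : V → Bool, ∑ S ∈ E₀.powerset, wtIsing E₀ β lam σ * PIR E₀ β σ S := by
        refine Finset.sum_congr rfl (fun σ _ => ?_)
        rw [← Finset.mul_sum, sum_PIR E₀ β σ, mul_one]
    _ = ∑ S ∈ E₀.powerset, ∑ σ : V → Bool, (∏ e ∈ E₀, β e) *
          (wtWRC E₀ (fun e => 1 - (β e)⁻¹) lam S * PRI E₀ lam S σ) := by
        rw [Finset.sum_comm]
        refine Finset.sum_congr rfl (fun S hS => Finset.sum_congr rfl (fun σ _ => ?_))
        exact joint_identity E₀ β lam hβ hlam (Finset.mem_powerset.1 hS) σ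
    _ = (∏ e ∈ E₀, β e) * ∑ S ∈ E₀.powerset, wtWRC E₀ (fun e => 1 - (β e)⁻¹) lam S := by
        rw [Finset.mul_sum]
        refine Finset.sum_congr rfl (fun S hS => ?_)
        rw [← Finset.mul_sum, ← Finset.mul_sum,
          sum_PRI E₀ lam hlam (Finset.mem_powerset.1 hS), mul_one]

/-- Detailed balance for the two half-steps. -/
lemma detailed_balance (hβ : ∀ e ∈ E₀, 1 < β e) (hlam : ∀ v, 0 < lam v ∧ lam v ≤ 1)
    {S : Finset (Sym2 V)} (hS : S ⊆ E₀) (σ : V → Bool) :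
    piIsing E₀ β lam σ * PIR E₀ β σ S
      = piWRC E₀ (fun e => 1 - (β e)⁻¹) lam S * PRI E₀ lam S σ := by
  unfold piIsing piWRC
  rw [ZIsing_eq E₀ β lam hβ hlam]

  have hZ : 0 < ZWRC E₀ (fun e => 1 - (β e)⁻¹) lam := ZWRC_pos E₀ β lam hβ hlam
  have hc : (0:ℝ) < ∏ e ∈ E₀, β e :=
    Finset.prod_pos (fun e he => by have := hβ e he; linarith)
  rw [div_mul_eq_mul_div, div_mul_eq_mul_div, joint_identity E₀ β lam hβ hlam hS σ,
    mul_div_mul_left _ _ (ne_of_gt hc)]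

end Model

end SWProof
namespace SWProof

variable {V : Type*} [Fintype V] [DecidableEq V]

/-- Weighted Cauchy–Schwarz. -/
lemma weighted_cs {ι : Type*} (s : Finset ι) (w u t : ι → ℝ) (hw : ∀ i ∈ s, 0 ≤ w i) :
    (∑ i ∈ s, w i * u i * t i)^2 ≤ (∑ i ∈ s, w i * u i^2) * (∑ i ∈ s, w i * t i^2) := by
  have h := Finset.sum_mul_sq_le_sq_mul_sq s (fun i => Real.sqrt (w i) * u i)
    (fun i => Real.sqrt (w i) * t i)
  have e1 : ∀ i ∈ s, (Real.sqrt (w i) * u i) * (Real.sqrt (w i) * t i) = w i * u i * t i := by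
    intro i hi
    have : Real.sqrt (w i) * Real.sqrt (w i) = w i := Real.mul_self_sqrt (hw i hi)
    nlinarith [this, sq_nonneg (u i - t i), sq_nonneg (u i + t i)]
  have e2 : ∀ i ∈ s, (Real.sqrt (w i) * u i)^2 = w i * u i^2 := by
    intro i hi
    have : Real.sqrt (w i) * Real.sqrt (w i) = w i := Real.mul_self_sqrt (hw i hi)
    nlinarith [this]
  have e3 : ∀ i ∈ s, (Real.sqrt (w i) * t i)^2 = w i * t i^2 := by
    intro i hi
    have : Real.sqrt (w i) * Real.sqrt (w i) = w i := Real.mul_self_sqrt (hw i hi)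
    nlinarith [this]
  rw [Finset.sum_congr rfl e1, Finset.sum_congr rfl e2, Finset.sum_congr rfl e3] at h
  exact h

/-- Jensen: for a probability vector, (mean)² ≤ mean of squares. -/
lemma jensen_sq {ι : Type*} (s : Finset ι) (w f : ι → ℝ) (hw : ∀ i ∈ s, 0 ≤ w i)
    (hw1 : ∑ i ∈ s, w i = 1) :
    (∑ i ∈ s, w i * f i)^2 ≤ ∑ i ∈ s, w i * f i^2 := by
  have h := weighted_cs s w (fun _ => 1) f hw
  simp only [one_pow, mul_one] at h
  calc (∑ i ∈ s, w i * f i)^2 = (∑ i ∈ s, w i * 1 * f i)^2 := by simp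
    _ ≤ (∑ i ∈ s, w i) * (∑ i ∈ s, w i * f i^2) := by
        simpa using weighted_cs s w (fun _ => 1) f hw
    _ = ∑ i ∈ s, w i * f i^2 := by rw [hw1, one_mul]

section Model

variable (E₀ : Finset (Sym2 V)) (β : Sym2 V → ℝ) (lam : V → ℝ)

lemma PIR_nonneg (hβ : ∀ e ∈ E₀, 1 < β e) (σ : V → Bool) (S : Finset (Sym2 V)) :
    0 ≤ PIR E₀ β σ S := by
  unfold PIR
  split
  · rename_i h
    refine mul_nonneg (Finset.prod_nonneg fun e he => ?_) (Finset.prod_nonneg fun e he => ?_)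
    · have hb := hβ e (monoEdges_subset E₀ σ (h he))
      have : (β e)⁻¹ < 1 := by rw [inv_lt_one_iff₀]; right; exact hb
      linarith
    · have hb := hβ e (monoEdges_subset E₀ σ (Finset.mem_sdiff.1 he).1)
      have : 0 < (β e)⁻¹ := inv_pos.2 (by linarith)
      linarith
  · exact le_refl 0

lemma PRI_nonneg (hlam : ∀ v, 0 < lam v ∧ lam v ≤ 1) (S : Finset (Sym2 V)) (σ : V → Bool) :
    0 ≤ PRI E₀ lam S σ := by
  unfold PRI
  split
  · refine Finset.prod_nonneg fun C _ => div_nonneg (Finset.prod_nonneg fun v _ => ?_) ?_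
    · split
      · exact (hlam v).1.le
      · norm_num
    · have : 0 < ∏ v ∈ C, lam v := Finset.prod_pos fun v _ => (hlam v).1
      linarith
  · exact le_refl 0

variable (hβ : ∀ e ∈ E₀, 1 < β e) (hlam : ∀ v, 0 < lam v ∧ lam v ≤ 1)

lemma piWRC_pos (hβ : ∀ e ∈ E₀, 1 < β e) (hlam : ∀ v, 0 < lam v ∧ lam v ≤ 1)
    {S : Finset (Sym2 V)} (hS : S ⊆ E₀) :
    0 < piWRC E₀ (fun e => 1 - (β e)⁻¹) lam S :=
  div_pos (wtWRC_pos E₀ β lam hβ hlam hS) (ZWRC_pos E₀ β lam hβ hlam)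

lemma sum_piWRC (hβ : ∀ e ∈ E₀, 1 < β e) (hlam : ∀ v, 0 < lam v ∧ lam v ≤ 1) :
    ∑ S ∈ E₀.powerset, piWRC E₀ (fun e => 1 - (β e)⁻¹) lam S = 1 := by
  unfold piWRC
  rw [← Finset.sum_div]
  exact div_self (ne_of_gt (ZWRC_pos E₀ β lam hβ hlam))

lemma piIsing_pos (hβ : ∀ e ∈ E₀, 1 < β e) (hlam : ∀ v, 0 < lam v ∧ lam v ≤ 1) (σ : V → Bool) :
    0 < piIsing E₀ β lam σ :=
  div_pos (wtIsing_pos E₀ β lam hβ hlam σ) (ZIsing_pos E₀ β lam hβ hlam)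

lemma sum_piIsing (hβ : ∀ e ∈ E₀, 1 < β e) (hlam : ∀ v, 0 < lam v ∧ lam v ≤ 1) :
    ∑ σ : V → Bool, piIsing E₀ β lam σ = 1 := by
  unfold piIsing
  rw [← Finset.sum_div]
  exact div_self (ne_of_gt (ZIsing_pos E₀ β lam hβ hlam))

/-- The Ising marginal of the joint measure is the random-cluster measure. -/
lemma marginal_piWRC (hβ : ∀ e ∈ E₀, 1 < β e) (hlam : ∀ v, 0 < lam v ∧ lam v ≤ 1)
    {S : Finset (Sym2 V)} (hS : S ⊆ E₀) :
    ∑ σ : V → Bool, piIsing E₀ β lam σ * PIR E₀ β σ S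
      = piWRC E₀ (fun e => 1 - (β e)⁻¹) lam S := by
  have h : ∀ σ : V → Bool, piIsing E₀ β lam σ * PIR E₀ β σ S
      = piWRC E₀ (fun e => 1 - (β e)⁻¹) lam S * PRI E₀ lam S σ :=
    fun σ => detailed_balance E₀ β lam hβ hlam hS σ
  rw [Finset.sum_congr rfl (fun σ _ => h σ), ← Finset.mul_sum,
    sum_PRI E₀ lam hlam hS, mul_one]

end Model

end SWProof
namespace SWProof

variable {V : Type*} [Fintype V] [DecidableEq V]

section Model

variable (E₀ : Finset (Sym2 V)) (β : Sym2 V → ℝ) (lam : V → ℝ)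

/-- `B` half-step applied to a spin observable. -/
def Bop (f : (V → Bool) → ℝ) (S : Finset (Sym2 V)) : ℝ :=
  ∑ τ : V → Bool, PRI E₀ lam S τ * f τ

/-- `A` half-step applied to an edge observable. -/
def Aop (g : Finset (Sym2 V) → ℝ) (σ : V → Bool) : ℝ :=
  ∑ S ∈ E₀.powerset, PIR E₀ β σ S * g S

lemma dirichlet_SWI (hβ : ∀ e ∈ E₀, 1 < β e) (hlam : ∀ v, 0 < lam v ∧ lam v ≤ 1)
    (f : (V → Bool) → ℝ) :
    dirichletOn Finset.univ (piIsing E₀ β lam) (PSWIsing E₀ β lam) f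
      = (∑ σ : V → Bool, piIsing E₀ β lam σ * f σ^2)
        - ∑ S ∈ E₀.powerset, piWRC E₀ (fun e => 1 - (β e)⁻¹) lam S * (Bop E₀ lam f S)^2 := by
  have db : ∀ S ∈ E₀.powerset, ∀ σ : V → Bool,
      piIsing E₀ β lam σ * PIR E₀ β σ S
        = piWRC E₀ (fun e => 1 - (β e)⁻¹) lam S * PRI E₀ lam S σ :=
    fun S hS σ => detailed_balance E₀ β lam hβ hlam (Finset.mem_powerset.1 hS) σ
  have h1 : ∀ σ : V → Bool, (∑ τ : V → Bool, PSWIsing E₀ β lam σ τ * f τ)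
      = ∑ S ∈ E₀.powerset, PIR E₀ β σ S * Bop E₀ lam f S := by
    intro σ
    unfold PSWIsing Bop
    simp only [Finset.sum_mul]
    rw [Finset.sum_comm]
    simp only [mul_assoc, ← Finset.mul_sum]
  have h2 : ∀ S ∈ E₀.powerset, (∑ σ : V → Bool,
        piIsing E₀ β lam σ * f σ * (PIR E₀ β σ S * Bop E₀ lam f S))
      = piWRC E₀ (fun e => 1 - (β e)⁻¹) lam S * (Bop E₀ lam f S)^2 := by
    intro S hS
    have hpt : ∀ σ : V → Bool, piIsing E₀ β lam σ * f σ * (PIR E₀ β σ S * Bop E₀ lam f S)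
        = (piWRC E₀ (fun e => 1 - (β e)⁻¹) lam S * PRI E₀ lam S σ * f σ) * Bop E₀ lam f S := by
      intro σ
      rw [← db S hS σ]
      ring
    rw [Finset.sum_congr rfl (fun σ _ => hpt σ), ← Finset.sum_mul]
    have hB : (∑ σ : V → Bool, piWRC E₀ (fun e => 1 - (β e)⁻¹) lam S * PRI E₀ lam S σ * f σ)
        = piWRC E₀ (fun e => 1 - (β e)⁻¹) lam S * Bop E₀ lam f S := by
      unfold Bop
      rw [Finset.mul_sum]
      exact Finset.sum_congr rfl (fun σ _ => by ring)
    rw [hB]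
    ring
  unfold dirichletOn
  have hsplit : ∀ σ : V → Bool, piIsing E₀ β lam σ * f σ *
        (f σ - ∑ τ ∈ Finset.univ, PSWIsing E₀ β lam σ τ * f τ)
      = piIsing E₀ β lam σ * f σ^2
        - piIsing E₀ β lam σ * f σ * (∑ S ∈ E₀.powerset, PIR E₀ β σ S * Bop E₀ lam f S) := by
    intro σ
    rw [show (∑ τ ∈ Finset.univ, PSWIsing E₀ β lam σ τ * f τ)
        = ∑ S ∈ E₀.powerset, PIR E₀ β σ S * Bop E₀ lam f S from h1 σ]
    ring
  rw [Finset.sum_congr rfl (fun σ _ => hsplit σ), Finset.sum_sub_distrib]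
  congr 1
  have h3 : ∑ σ : V → Bool, piIsing E₀ β lam σ * f σ *
        (∑ S ∈ E₀.powerset, PIR E₀ β σ S * Bop E₀ lam f S)
      = ∑ S ∈ E₀.powerset, ∑ σ : V → Bool,
        piIsing E₀ β lam σ * f σ * (PIR E₀ β σ S * Bop E₀ lam f S) := by
    simp only [Finset.mul_sum]
    exact Finset.sum_comm
  rw [h3]
  exact Finset.sum_congr rfl h2

/-- `N_R(g) = ∑_σ π_I(σ) E_{μ_σ}[g]`-type identity. -/
lemma NR_eq (hβ : ∀ e ∈ E₀, 1 < β e) (hlam : ∀ v, 0 < lam v ∧ lam v ≤ 1)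
    (g : Finset (Sym2 V) → ℝ) :
    ∑ S ∈ E₀.powerset, piWRC E₀ (fun e => 1 - (β e)⁻¹) lam S * g S
      = ∑ σ : V → Bool, piIsing E₀ β lam σ * (∑ S ∈ E₀.powerset, PIR E₀ β σ S * g S) := by
  have h1 : ∀ S ∈ E₀.powerset, piWRC E₀ (fun e => 1 - (β e)⁻¹) lam S * g S
      = ∑ σ : V → Bool, piIsing E₀ β lam σ * PIR E₀ β σ S * g S := by
    intro S hS
    rw [← Finset.sum_mul, marginal_piWRC E₀ β lam hβ hlam (Finset.mem_powerset.1 hS)]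
  rw [Finset.sum_congr rfl h1, Finset.sum_comm]
  refine Finset.sum_congr rfl (fun σ _ => ?_)
  rw [Finset.mul_sum]
  exact Finset.sum_congr rfl (fun S _ => by ring)

/-- Adjointness of the two half-steps. -/
lemma adjoint_op (hβ : ∀ e ∈ E₀, 1 < β e) (hlam : ∀ v, 0 < lam v ∧ lam v ≤ 1)
    (f : (V → Bool) → ℝ) (g : Finset (Sym2 V) → ℝ) :
    ∑ S ∈ E₀.powerset, piWRC E₀ (fun e => 1 - (β e)⁻¹) lam S * Bop E₀ lam f S * g S
      = ∑ σ : V → Bool, piIsing E₀ β lam σ * f σ * Aop E₀ β g σ := by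
  have h1 : ∀ S ∈ E₀.powerset, piWRC E₀ (fun e => 1 - (β e)⁻¹) lam S * Bop E₀ lam f S * g S
      = ∑ σ : V → Bool, piIsing E₀ β lam σ * f σ * (PIR E₀ β σ S * g S) := by
    intro S hS
    unfold Bop
    rw [Finset.mul_sum, Finset.sum_mul]
    refine Finset.sum_congr rfl (fun σ _ => ?_)
    have := detailed_balance E₀ β lam hβ hlam (Finset.mem_powerset.1 hS) σ
    calc piWRC E₀ (fun e => 1 - (β e)⁻¹) lam S * (PRI E₀ lam S σ * f σ) * g S
        = (piWRC E₀ (fun e => 1 - (β e)⁻¹) lam S * PRI E₀ lam S σ) * f σ * g S := by ring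
      _ = (piIsing E₀ β lam σ * PIR E₀ β σ S) * f σ * g S := by rw [this]
      _ = piIsing E₀ β lam σ * f σ * (PIR E₀ β σ S * g S) := by ring
  rw [Finset.sum_congr rfl h1, Finset.sum_comm]
  refine Finset.sum_congr rfl (fun σ _ => ?_)
  unfold Aop
  rw [Finset.mul_sum]

/-- Jensen for the `A` half-step. -/
lemma Aop_sq_le (hβ : ∀ e ∈ E₀, 1 < β e) (σ : V → Bool) (g : Finset (Sym2 V) → ℝ) :
    (Aop E₀ β g σ)^2 ≤ ∑ S ∈ E₀.powerset, PIR E₀ β σ S * g S^2 :=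
  jensen_sq _ _ _ (fun S _ => PIR_nonneg E₀ β hβ σ S) (sum_PIR E₀ β σ)

/-- Key product relation for flipping one edge in the percolation step. -/
lemma PIR_insert_rel (hβ : ∀ e ∈ E₀, 1 < β e) {e : Sym2 V} {T : Finset (Sym2 V)}
    (heT : e ∉ T) (σ : V → Bool) (hsub : insert e T ⊆ monoEdges E₀ σ) :
    PIR E₀ β σ T * (1 - (β e)⁻¹) = PIR E₀ β σ (insert e T) * (β e)⁻¹ := by
  have hTsub : T ⊆ monoEdges E₀ σ := (Finset.subset_insert e T).trans hsub
  have heM : e ∈ monoEdges E₀ σ := hsub (Finset.mem_insert_self e T)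
  unfold PIR
  rw [if_pos hTsub, if_pos hsub]
  rw [Finset.prod_insert heT]
  have hsd : monoEdges E₀ σ \ T = insert e (monoEdges E₀ σ \ insert e T) := by
    ext x
    simp only [Finset.mem_sdiff, Finset.mem_insert]
    constructor
    · rintro ⟨hx, hxT⟩
      by_cases hxe : x = e
      · exact Or.inl hxe
      · exact Or.inr ⟨hx, by simp [hxe, hxT]⟩
    · rintro (rfl | ⟨hx, hxi⟩)
      · exact ⟨heM, heT⟩
      · exact ⟨hx, fun h => hxi (Or.inr h)⟩
  have henotin : e ∉ monoEdges E₀ σ \ insert e T := by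
    simp [Finset.mem_sdiff]
  rw [hsd, Finset.prod_insert henotin]
  ring

/-- Per-spin, per-edge variance lower bound (law of total variance, easy direction). -/
lemma var_edge_bound (hβ : ∀ e ∈ E₀, 1 < β e) (σ : V → Bool) {e : Sym2 V} (he : e ∈ E₀)
    (g : Finset (Sym2 V) → ℝ) (c : ℝ) :
    (β e)⁻¹ * ∑ T ∈ (E₀.erase e).powerset,
        PIR E₀ β σ (insert e T) * (g (insert e T) - g T)^2
      ≤ ∑ S ∈ E₀.powerset, PIR E₀ β σ S * (g S - c)^2 := by
  have hbe := hβ e he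
  have hp0 : (0:ℝ) < 1 - (β e)⁻¹ := by
    have : (β e)⁻¹ < 1 := by rw [inv_lt_one_iff₀]; right; exact hbe
    linarith
  have hp1 : (0:ℝ) < (β e)⁻¹ := inv_pos.2 (by linarith)
  have hsplit : ∑ S ∈ E₀.powerset, PIR E₀ β σ S * (g S - c)^2
      = ∑ T ∈ (E₀.erase e).powerset, (PIR E₀ β σ T * (g T - c)^2
          + PIR E₀ β σ (insert e T) * (g (insert e T) - c)^2) := by
    have hEE : E₀.powerset = (insert e (E₀.erase e)).powerset := by
      rw [Finset.insert_erase he]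
    rw [hEE, Finset.sum_powerset_insert (Finset.notMem_erase e E₀), ← Finset.sum_add_distrib]
  rw [hsplit, Finset.mul_sum]
  refine Finset.sum_le_sum (fun T hT => ?_)
  have heT : e ∉ T := fun h => Finset.notMem_erase e E₀ (Finset.mem_powerset.1 hT h)
  by_cases hsub : insert e T ⊆ monoEdges E₀ σ
  · have hrel := PIR_insert_rel E₀ β hβ heT σ hsub
    set P' := PIR E₀ β σ (insert e T) with hP'
    set PT := PIR E₀ β σ T with hPT
    set p := 1 - (β e)⁻¹ with hpdef
    have hP'0 : 0 ≤ P' := PIR_nonneg E₀ β hβ σ _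
    have hPT0 : 0 ≤ PT := PIR_nonneg E₀ β hβ σ _
    set x := g T - c with hx
    set y := g (insert e T) - c with hy
    have hgd : g (insert e T) - g T = y - x := by rw [hx, hy]; ring
    rw [hgd]
    have hrel' : PT * p = P' * (1 - p) := by
      rw [hpdef]
      rw [show (1 - (1 - (β e)⁻¹)) = (β e)⁻¹ by ring]
      exact hrel
    have h2 : PT * p * x^2 = P' * (1 - p) * x^2 := by rw [hrel']
    have hkey : 0 ≤ P' * ((1-p)*x + p*y)^2 := mul_nonneg hP'0 (sq_nonneg _)
    have hpp : (β e)⁻¹ = 1 - p := by rw [hpdef]; ring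
    rw [hpp]
    rw [← mul_le_mul_iff_right₀ (show (0:ℝ) < p from by rw [hpdef]; exact hp0)]
    nlinarith [h2, hkey]
  · have hzero : PIR E₀ β σ (insert e T) = 0 := by
      unfold PIR
      rw [if_neg hsub]
    rw [hzero]
    have := PIR_nonneg E₀ β hβ σ T
    have h2 := sq_nonneg (g T - c)
    nlinarith

end Model

end SWProof
namespace SWProof

variable {V : Type*} [Fintype V] [DecidableEq V]

lemma symmDiff_singleton_notmem {T : Finset (Sym2 V)} {e : Sym2 V} (h : e ∉ T) :
    symmDiff T {e} = insert e T := by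
  ext x
  simp only [Finset.mem_symmDiff, Finset.mem_singleton, Finset.mem_insert]
  constructor
  · rintro (⟨hx, hne⟩ | ⟨rfl, _⟩)
    · exact Or.inr hx
    · exact Or.inl rfl
  · rintro (rfl | hx)
    · exact Or.inr ⟨rfl, h⟩
    · exact Or.inl ⟨hx, fun hh => h (hh ▸ hx)⟩

lemma symmDiff_singleton_mem {T : Finset (Sym2 V)} {e : Sym2 V} (h : e ∉ T) :
    symmDiff (insert e T) {e} = T := by
  ext x
  simp only [Finset.mem_symmDiff, Finset.mem_singleton, Finset.mem_insert]
  constructor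
  · rintro (⟨hx | hx, hne⟩ | ⟨rfl, hx⟩)
    · exact absurd hx hne
    · exact hx
    · exact absurd (Or.inl rfl) hx
  · intro hx
    exact Or.inl ⟨Or.inr hx, fun hh => h (hh ▸ hx)⟩

lemma choose_singleton_eq {α : Type*} (s : Finset α) (h : ∃ a, s = {a}) (e : α)
    (hs : s = {e}) : h.choose = e := by
  exact Finset.singleton_injective (h.choose_spec.symm.trans hs)

section Formula

variable (E₀ : Finset (Sym2 V)) (pi : Finset (Sym2 V) → ℝ)

lemma dirichlet_EF_formula (hpos : ∀ S ∈ E₀.powerset, 0 < pi S) (g : Finset (Sym2 V) → ℝ) :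
    dirichletOn E₀.powerset pi (PEF E₀ pi) g
      = ∑ e ∈ E₀, ∑ T ∈ (E₀.erase e).powerset,
          (1 / (2 * (E₀.card : ℝ))) * min (pi T) (pi (insert e T))
            * (g T - g (insert e T))^2 := by
  have hsd_mem : ∀ x ∈ E₀.powerset, ∀ e ∈ E₀, symmDiff x {e} ∈ E₀.powerset := by
    intro x hx e he
    rw [Finset.mem_powerset] at hx ⊢
    intro a ha
    rcases Finset.mem_symmDiff.1 ha with ⟨h1, _⟩ | ⟨h1, _⟩
    · exact hx h1
    · rwa [Finset.mem_singleton.1 h1]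
  have hstep : ∀ x ∈ E₀.powerset, ∑ y ∈ E₀.powerset, PEF E₀ pi x y * g y
      = PEF E₀ pi x x * g x + ∑ e ∈ E₀, (1 / (2 * (E₀.card : ℝ)))
          * min 1 (pi (symmDiff x {e}) / pi x) * g (symmDiff x {e}) := by
    intro x hx
    rw [← Finset.add_sum_erase _ _ hx]
    congr 1
    have hfil : ∑ y ∈ (E₀.powerset.erase x), PEF E₀ pi x y * g y
        = ∑ y ∈ (E₀.powerset.erase x).filter (fun y => (symmDiff x y).card = 1),
            PEF E₀ pi x y * g y := by
      refine (Finset.sum_filter_of_ne (fun y hy hne => ?_)).symm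
      by_contra hcard
      have hxy : x ≠ y := fun h => (Finset.mem_erase.1 hy).1 h.symm
      unfold PEF at hne
      rw [if_neg hxy, if_neg hcard] at hne
      exact hne (zero_mul _)
    rw [hfil]
    refine Finset.sum_bij' (fun y hy => ((Finset.card_eq_one.1 (Finset.mem_filter.1 hy).2).choose))
      (fun e he => symmDiff x {e}) ?_ ?_ ?_ ?_ ?_
    · -- choose lands in E₀
      intro y hy
      have hspec := (Finset.card_eq_one.1 (Finset.mem_filter.1 hy).2).choose_spec
      set e := (Finset.card_eq_one.1 (Finset.mem_filter.1 hy).2).choose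
      have he : e ∈ symmDiff x y := by rw [hspec]; exact Finset.mem_singleton_self e
      rcases Finset.mem_symmDiff.1 he with ⟨h1, _⟩ | ⟨h1, _⟩
      · exact Finset.mem_powerset.1 hx h1
      · exact Finset.mem_powerset.1 (Finset.mem_erase.1 (Finset.mem_filter.1 hy).1).2 h1
    · -- symmDiff lands in the filter set
      intro e he
      have hsd : symmDiff x (symmDiff x {e}) = {e} := symmDiff_symmDiff_cancel_left x {e}
      refine Finset.mem_filter.2 ⟨Finset.mem_erase.2 ⟨?_, hsd_mem x hx e he⟩, by
        rw [hsd]; exact Finset.card_singleton e⟩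
      intro h
      have hcon : ({e} : Finset (Sym2 V)) = ∅ := by
        rw [← hsd, h, symmDiff_self]
        rfl
      exact Finset.singleton_ne_empty e hcon
    · -- left inverse
      intro y hy
      rw [← (Finset.card_eq_one.1 (Finset.mem_filter.1 hy).2).choose_spec]
      exact symmDiff_symmDiff_cancel_left x y
    · -- right inverse
      intro e he
      exact choose_singleton_eq _ _ e (symmDiff_symmDiff_cancel_left x {e})
    · -- values agree
      intro y hy
      have hspec := (Finset.card_eq_one.1 (Finset.mem_filter.1 hy).2).choose_spec
      set e := (Finset.card_eq_one.1 (Finset.mem_filter.1 hy).2).choose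
      have hxy : x ≠ y := fun h => (Finset.mem_erase.1 (Finset.mem_filter.1 hy).1).1 h.symm
      have hy' : symmDiff x {e} = y := by
        rw [← hspec]
        exact symmDiff_symmDiff_cancel_left x y
      unfold PEF
      rw [if_neg hxy, if_pos (Finset.mem_filter.1 hy).2, hy']
  unfold dirichletOn
  have hmin : ∀ x ∈ E₀.powerset, ∀ e ∈ E₀,
      pi x * min 1 (pi (symmDiff x {e}) / pi x) = min (pi x) (pi (symmDiff x {e})) := by
    intro x hx e he
    have hx0 : 0 < pi x := hpos x hx
    rw [mul_min_of_nonneg _ _ hx0.le, mul_one, mul_div_cancel₀ _ (ne_of_gt hx0)]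
  have hterm : ∀ x ∈ E₀.powerset, pi x * g x * (g x - ∑ y ∈ E₀.powerset, PEF E₀ pi x y * g y)
      = ∑ e ∈ E₀, (1 / (2 * (E₀.card : ℝ))) * min (pi x) (pi (symmDiff x {e}))
          * (g x * (g x - g (symmDiff x {e}))) := by
    intro x hx
    rw [hstep x hx]
    have hxx : PEF E₀ pi x x = 1 - (1 / (2 * (E₀.card : ℝ)))
        * ∑ e ∈ E₀, min 1 (pi (symmDiff x {e}) / pi x) := by
      unfold PEF
      rw [if_pos rfl]
    rw [hxx]
    have hrhs : ∑ e ∈ E₀, (1 / (2 * (E₀.card : ℝ))) * min (pi x) (pi (symmDiff x {e}))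
          * (g x * (g x - g (symmDiff x {e})))
        = ((1 / (2 * (E₀.card : ℝ))) * (pi x * g x ^ 2)) *
            (∑ e ∈ E₀, min 1 (pi (symmDiff x {e}) / pi x))
          - (pi x * g x) * (∑ e ∈ E₀, (1 / (2 * (E₀.card : ℝ)))
              * min 1 (pi (symmDiff x {e}) / pi x) * g (symmDiff x {e})) := by
      rw [Finset.mul_sum, Finset.mul_sum, ← Finset.sum_sub_distrib]
      refine Finset.sum_congr rfl (fun e he => ?_)
      rw [← hmin x hx e he]
      ring
    rw [hrhs]
    ring
  rw [Finset.sum_congr rfl hterm, Finset.sum_comm]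
  refine Finset.sum_congr rfl (fun e he => ?_)
  have hEE : E₀.powerset = (insert e (E₀.erase e)).powerset := by
    rw [Finset.insert_erase he]
  rw [hEE, Finset.sum_powerset_insert (Finset.notMem_erase e E₀), ← Finset.sum_add_distrib]
  refine Finset.sum_congr rfl (fun T hT => ?_)
  have heT : e ∉ T := fun h => Finset.notMem_erase e E₀ (Finset.mem_powerset.1 hT h)
  rw [symmDiff_singleton_notmem heT, symmDiff_singleton_mem heT,
    min_comm (pi (insert e T)) (pi T)]
  ring

end Formula

end SWProof
namespace SWProof

variable {V : Type*} [Fintype V] [DecidableEq V]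

lemma varOn_nonneg {α : Type*} (s : Finset α) (pi f : α → ℝ)
    (hw : ∀ x ∈ s, 0 ≤ pi x) (h1 : ∑ x ∈ s, pi x = 1) :
    0 ≤ varOn s pi f := by
  unfold varOn
  have := jensen_sq s pi f hw h1
  linarith

section Formula

variable (E₀ : Finset (Sym2 V)) (pi : Finset (Sym2 V) → ℝ)

lemma dirichlet_EF_nonneg (hpos : ∀ S ∈ E₀.powerset, 0 < pi S) (g : Finset (Sym2 V) → ℝ) :
    0 ≤ dirichletOn E₀.powerset pi (PEF E₀ pi) g := by
  rw [dirichlet_EF_formula E₀ pi hpos g]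
  refine Finset.sum_nonneg (fun e he => Finset.sum_nonneg (fun T hT => ?_))
  have hT' : T ∈ E₀.powerset := Finset.mem_powerset.2
    ((Finset.mem_powerset.1 hT).trans (Finset.erase_subset e E₀))
  have hT'' : insert e T ∈ E₀.powerset := Finset.mem_powerset.2
    (Finset.insert_subset he ((Finset.mem_powerset.1 hT).trans (Finset.erase_subset e E₀)))
  have hmin : 0 ≤ min (pi T) (pi (insert e T)) :=
    le_min (hpos T hT').le (hpos _ hT'').le
  have hκ : (0:ℝ) ≤ 1 / (2 * (E₀.card : ℝ)) := by positivity
  positivity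

lemma dirichlet_EF_le_var (hpos : ∀ S ∈ E₀.powerset, 0 < pi S)
    (h1 : ∑ S ∈ E₀.powerset, pi S = 1) (g : Finset (Sym2 V) → ℝ) :
    dirichletOn E₀.powerset pi (PEF E₀ pi) g ≤ varOn E₀.powerset pi g := by
  rcases Finset.eq_empty_or_nonempty E₀ with hE | hE
  · subst hE
    rw [dirichlet_EF_formula ∅ pi hpos g]
    simp only [Finset.sum_empty]
    exact varOn_nonneg _ _ _ (fun x hx => (hpos x hx).le) h1
  · have hm : (0:ℝ) < E₀.card := by
      exact_mod_cast Finset.card_pos.2 hE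
    set c := ∑ S ∈ E₀.powerset, pi S * g S with hc
    have hvar : varOn E₀.powerset pi g = ∑ S ∈ E₀.powerset, pi S * (g S - c)^2 := by
      unfold varOn
      have hexp : ∀ S ∈ E₀.powerset, pi S * (g S - c)^2
          = pi S * g S^2 - 2*c*(pi S * g S) + c^2 * pi S := fun S _ => by ring
      rw [Finset.sum_congr rfl hexp, Finset.sum_add_distrib, Finset.sum_sub_distrib,
        ← Finset.mul_sum, ← Finset.mul_sum, ← hc, h1]
      ring
    rw [dirichlet_EF_formula E₀ pi hpos g, hvar]
    have hbound : ∀ e ∈ E₀, ∑ T ∈ (E₀.erase e).powerset,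
        (1 / (2 * (E₀.card : ℝ))) * min (pi T) (pi (insert e T)) * (g T - g (insert e T))^2
        ≤ (1 / (2 * (E₀.card : ℝ))) * (2 * ∑ S ∈ E₀.powerset, pi S * (g S - c)^2) := by
      intro e he
      have hEE : E₀.powerset = (insert e (E₀.erase e)).powerset := by
        rw [Finset.insert_erase he]
      rw [hEE, Finset.sum_powerset_insert (Finset.notMem_erase e E₀),
        ← Finset.sum_add_distrib, Finset.mul_sum, Finset.mul_sum]
      refine Finset.sum_le_sum (fun T hT => ?_)
      have hT1 : T ∈ E₀.powerset := Finset.mem_powerset.2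
        ((Finset.mem_powerset.1 hT).trans (Finset.erase_subset e E₀))
      have hT2 : insert e T ∈ E₀.powerset := Finset.mem_powerset.2
        (Finset.insert_subset he ((Finset.mem_powerset.1 hT).trans (Finset.erase_subset e E₀)))
      have h1' : min (pi T) (pi (insert e T)) ≤ pi T := min_le_left _ _
      have h2' : min (pi T) (pi (insert e T)) ≤ pi (insert e T) := min_le_right _ _
      have h0 : 0 ≤ min (pi T) (pi (insert e T)) := le_min (hpos T hT1).le (hpos _ hT2).le
      have hκ : (0:ℝ) ≤ 1 / (2 * (E₀.card : ℝ)) := by positivity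
      have hcore : min (pi T) (pi (insert e T)) * (g T - g (insert e T))^2
          ≤ 2 * (pi T * (g T - c)^2 + pi (insert e T) * (g (insert e T) - c)^2) := by
        set x := g T - c
        set y := g (insert e T) - c
        have hd : g T - g (insert e T) = x - y := by simp [x, y]
        rw [hd]
        nlinarith [sq_nonneg (x + y), sq_nonneg (x - y), h1', h2', h0,
          mul_le_mul_of_nonneg_right h1' (sq_nonneg x),
          mul_le_mul_of_nonneg_right h2' (sq_nonneg y)]
      calc (1 / (2 * (E₀.card : ℝ))) * min (pi T) (pi (insert e T)) * (g T - g (insert e T))^2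
          = (1 / (2 * (E₀.card : ℝ))) * (min (pi T) (pi (insert e T))
              * (g T - g (insert e T))^2) := by ring
        _ ≤ (1 / (2 * (E₀.card : ℝ))) * (2 * (pi T * (g T - c)^2
              + pi (insert e T) * (g (insert e T) - c)^2)) :=
            mul_le_mul_of_nonneg_left hcore hκ
    calc ∑ e ∈ E₀, ∑ T ∈ (E₀.erase e).powerset,
          (1 / (2 * (E₀.card : ℝ))) * min (pi T) (pi (insert e T)) * (g T - g (insert e T))^2
        ≤ ∑ e ∈ E₀, (1 / (2 * (E₀.card : ℝ))) * (2 * ∑ S ∈ E₀.powerset, pi S * (g S - c)^2) :=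
          Finset.sum_le_sum hbound
      _ = ∑ S ∈ E₀.powerset, pi S * (g S - c)^2 := by
          rw [Finset.sum_const, nsmul_eq_mul]
          field_simp

end Formula

end SWProof
namespace SWProof

variable {V : Type*} [Fintype V] [DecidableEq V]

section Model

variable (E₀ : Finset (Sym2 V)) (β : Sym2 V → ℝ) (lam : V → ℝ)

lemma marginal_piIsing (hβ : ∀ e ∈ E₀, 1 < β e) (hlam : ∀ v, 0 < lam v ∧ lam v ≤ 1)
    (τ : V → Bool) :
    ∑ S ∈ E₀.powerset, piWRC E₀ (fun e => 1 - (β e)⁻¹) lam S * PRI E₀ lam S τ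
      = piIsing E₀ β lam τ := by
  have h : ∀ S ∈ E₀.powerset, piWRC E₀ (fun e => 1 - (β e)⁻¹) lam S * PRI E₀ lam S τ
      = piIsing E₀ β lam τ * PIR E₀ β τ S :=
    fun S hS => (detailed_balance E₀ β lam hβ hlam (Finset.mem_powerset.1 hS) τ).symm
  rw [Finset.sum_congr rfl h, ← Finset.mul_sum, sum_PIR E₀ β τ, mul_one]

lemma NR_Bop_le (hβ : ∀ e ∈ E₀, 1 < β e) (hlam : ∀ v, 0 < lam v ∧ lam v ≤ 1)
    (f : (V → Bool) → ℝ) :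
    ∑ S ∈ E₀.powerset, piWRC E₀ (fun e => 1 - (β e)⁻¹) lam S * (Bop E₀ lam f S)^2
      ≤ ∑ σ : V → Bool, piIsing E₀ β lam σ * f σ^2 := by
  have h1 : ∀ S ∈ E₀.powerset, piWRC E₀ (fun e => 1 - (β e)⁻¹) lam S * (Bop E₀ lam f S)^2
      ≤ piWRC E₀ (fun e => 1 - (β e)⁻¹) lam S * ∑ τ : V → Bool, PRI E₀ lam S τ * f τ^2 := by
    intro S hS
    refine mul_le_mul_of_nonneg_left ?_
      (piWRC_pos E₀ β lam hβ hlam (Finset.mem_powerset.1 hS)).le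
    exact jensen_sq _ _ _ (fun τ _ => PRI_nonneg E₀ lam hlam S τ)
      (sum_PRI E₀ lam hlam (Finset.mem_powerset.1 hS))
  refine le_trans (Finset.sum_le_sum h1) (le_of_eq ?_)
  have h2 : ∀ S ∈ E₀.powerset, piWRC E₀ (fun e => 1 - (β e)⁻¹) lam S
        * ∑ τ : V → Bool, PRI E₀ lam S τ * f τ^2
      = ∑ τ : V → Bool, piWRC E₀ (fun e => 1 - (β e)⁻¹) lam S * PRI E₀ lam S τ * f τ^2 := by
    intro S _
    rw [Finset.mul_sum]
    exact Finset.sum_congr rfl (fun τ _ => by ring)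
  rw [Finset.sum_congr rfl h2, Finset.sum_comm]
  refine Finset.sum_congr rfl (fun τ _ => ?_)
  rw [← Finset.sum_mul, marginal_piIsing E₀ β lam hβ hlam τ]

lemma wtWRC_insert_rel (hβ : ∀ e ∈ E₀, 1 < β e) {e : Sym2 V} {T : Finset (Sym2 V)}
    (he : e ∈ E₀) (heT : e ∉ T) :
    wtWRC E₀ (fun e => 1 - (β e)⁻¹) lam (insert e T) * (β e)⁻¹ * clusterProd T lam
      = wtWRC E₀ (fun e => 1 - (β e)⁻¹) lam T * (1 - (β e)⁻¹) * clusterProd (insert e T) lam := by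
  unfold wtWRC
  rw [Finset.prod_insert heT]
  have hsd : E₀ \ T = insert e (E₀ \ insert e T) := by
    ext x
    simp only [Finset.mem_sdiff, Finset.mem_insert]
    constructor
    · rintro ⟨hx, hxT⟩
      by_cases hxe : x = e
      · exact Or.inl hxe
      · exact Or.inr ⟨hx, by simp [hxe, hxT]⟩
    · rintro (rfl | ⟨hx, hxi⟩)
      · exact ⟨he, heT⟩
      · exact ⟨hx, fun h => hxi (Or.inr h)⟩
  have henotin : e ∉ E₀ \ insert e T := by simp
  rw [hsd, Finset.prod_insert henotin]
  ring

lemma piWRC_insert_rel (hβ : ∀ e ∈ E₀, 1 < β e) (hlam : ∀ v, 0 < lam v ∧ lam v ≤ 1)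
    {e : Sym2 V} {T : Finset (Sym2 V)} (he : e ∈ E₀) (heT : e ∉ T) :
    piWRC E₀ (fun e => 1 - (β e)⁻¹) lam (insert e T) * (β e)⁻¹ * clusterProd T lam
      = piWRC E₀ (fun e => 1 - (β e)⁻¹) lam T * (1 - (β e)⁻¹)
          * clusterProd (insert e T) lam := by
  unfold piWRC
  rw [div_mul_eq_mul_div, div_mul_eq_mul_div, div_mul_eq_mul_div, div_mul_eq_mul_div,
    wtWRC_insert_rel E₀ β lam hβ he heT]

lemma min_le_cluster (hβ : ∀ e ∈ E₀, 1 < β e) (hlam : ∀ v, 0 < lam v ∧ lam v ≤ 1)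
    {e : Sym2 V} {T : Finset (Sym2 V)} (hdiag : ¬e.IsDiag) (he : e ∈ E₀) (heT : e ∉ T)
    (hT : T ⊆ E₀) :
    min (piWRC E₀ (fun e => 1 - (β e)⁻¹) lam T)
        (piWRC E₀ (fun e => 1 - (β e)⁻¹) lam (insert e T))
      ≤ 6 * (β e)⁻¹ * piWRC E₀ (fun e => 1 - (β e)⁻¹) lam (insert e T) := by
  set a := piWRC E₀ (fun e => 1 - (β e)⁻¹) lam T with ha
  set b := piWRC E₀ (fun e => 1 - (β e)⁻¹) lam (insert e T) with hb
  have hbe := hβ e he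
  have hr0 : (0:ℝ) < (β e)⁻¹ := inv_pos.2 (by linarith)
  have hr1 : (β e)⁻¹ < 1 := by rw [inv_lt_one_iff₀]; right; exact hbe
  have ha0 : 0 < a := piWRC_pos E₀ β lam hβ hlam hT
  have hb0 : 0 < b := piWRC_pos E₀ β lam hβ hlam (Finset.insert_subset he hT)
  have hCPT : 0 < clusterProd T lam := clusterProd_pos (fun w => (hlam w).1)
  have hCPT' : 0 < clusterProd (insert e T) lam := clusterProd_pos (fun w => (hlam w).1)
  have hCP : clusterProd T lam ≤ 2 * clusterProd (insert e T) lam :=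
    clusterProd_le_insert hdiag hlam
  have hrel := piWRC_insert_rel E₀ β lam hβ hlam he heT
  rw [← ha, ← hb] at hrel
  set r := (β e)⁻¹ with hrdef
  rcases le_or_gt (1/6 : ℝ) r with hcase | hcase
  · refine le_trans (min_le_right _ _) ?_
    nlinarith
  · refine le_trans (min_le_left _ _) ?_
    have h1 : b * r * clusterProd T lam ≤ b * r * (2 * clusterProd (insert e T) lam) := by
      have : 0 ≤ b * r := by positivity
      nlinarith
    have h2 : a * (1 - r) * clusterProd (insert e T) lam
        ≤ 2 * b * r * clusterProd (insert e T) lam := by nlinarith [hrel, h1]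
    have h3 : a * (1 - r) ≤ 2 * b * r :=
      le_of_mul_le_mul_right h2 hCPT'
    nlinarith [mul_pos hb0 hr0]

/-- Core comparison: the SW Dirichlet form on the cluster side dominates a third of the
edge-flip Dirichlet form. -/
lemma SW_dominates_EF (hβ : ∀ e ∈ E₀, 1 < β e) (hlam : ∀ v, 0 < lam v ∧ lam v ≤ 1)
    (hdiagAll : ∀ e ∈ E₀, ¬e.IsDiag) (hm : E₀.Nonempty) (g : Finset (Sym2 V) → ℝ) :
    (1/3) * dirichletOn E₀.powerset (piWRC E₀ (fun e => 1 - (β e)⁻¹) lam)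
        (PEF E₀ (piWRC E₀ (fun e => 1 - (β e)⁻¹) lam)) g
      ≤ (∑ S ∈ E₀.powerset, piWRC E₀ (fun e => 1 - (β e)⁻¹) lam S * g S^2)
        - ∑ σ : V → Bool, piIsing E₀ β lam σ * (Aop E₀ β g σ)^2 := by
  have hmR : (0:ℝ) < E₀.card := by exact_mod_cast Finset.card_pos.2 hm
  set m : ℝ := (E₀.card : ℝ) with hmdef
  -- middle quantity
  set Y : ℝ := (1/m) * ∑ e ∈ E₀, (β e)⁻¹ * ∑ T ∈ (E₀.erase e).powerset,
      piWRC E₀ (fun e => 1 - (β e)⁻¹) lam (insert e T) * (g (insert e T) - g T)^2 with hY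
  have hins_mem : ∀ e ∈ E₀, ∀ T ∈ (E₀.erase e).powerset, insert e T ⊆ E₀ := by
    intro e he T hT
    exact Finset.insert_subset he ((Finset.mem_powerset.1 hT).trans (Finset.erase_subset e E₀))
  -- Step 1: (1/3) E_EF ≤ Y
  have hstep1 : (1/3) * dirichletOn E₀.powerset (piWRC E₀ (fun e => 1 - (β e)⁻¹) lam)
      (PEF E₀ (piWRC E₀ (fun e => 1 - (β e)⁻¹) lam)) g ≤ Y := by
    rw [dirichlet_EF_formula E₀ _ (fun S hS => piWRC_pos E₀ β lam hβ hlam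
      (Finset.mem_powerset.1 hS)) g, hY, Finset.mul_sum, Finset.mul_sum]
    refine Finset.sum_le_sum (fun e he => ?_)
    rw [Finset.mul_sum, Finset.mul_sum, Finset.mul_sum]
    refine Finset.sum_le_sum (fun T hT => ?_)
    have heT : e ∉ T := fun h => Finset.notMem_erase e E₀ (Finset.mem_powerset.1 hT h)
    have hTsub : T ⊆ E₀ := (Finset.mem_powerset.1 hT).trans (Finset.erase_subset e E₀)
    have hmin := min_le_cluster E₀ β lam hβ hlam (hdiagAll e he) he heT hTsub
    have hsq : (0:ℝ) ≤ (g T - g (insert e T))^2 := sq_nonneg _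
    have hsq' : (g (insert e T) - g T)^2 = (g T - g (insert e T))^2 := by ring
    rw [hsq']
    have hκ : (0:ℝ) < 1/(6*m) := by positivity
    calc (1/3) * ((1 / (2 * m)) * min (piWRC E₀ (fun e => 1 - (β e)⁻¹) lam T)
            (piWRC E₀ (fun e => 1 - (β e)⁻¹) lam (insert e T)) * (g T - g (insert e T))^2)
        = (1/(6*m)) * (min (piWRC E₀ (fun e => 1 - (β e)⁻¹) lam T)
            (piWRC E₀ (fun e => 1 - (β e)⁻¹) lam (insert e T))) * (g T - g (insert e T))^2 := by
          ring
      _ ≤ (1/(6*m)) * (6 * (β e)⁻¹ * piWRC E₀ (fun e => 1 - (β e)⁻¹) lam (insert e T))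
            * (g T - g (insert e T))^2 := by
          exact mul_le_mul_of_nonneg_right (mul_le_mul_of_nonneg_left hmin hκ.le) hsq
      _ = (1/m) * ((β e)⁻¹ * (piWRC E₀ (fun e => 1 - (β e)⁻¹) lam (insert e T)
            * (g T - g (insert e T))^2)) := by
          field_simp
  -- Step 2: Y ≤ N_R(g) - N_I(Aop g)
  have hcen : ∀ σ : V → Bool, ∑ S ∈ E₀.powerset, PIR E₀ β σ S * (g S - Aop E₀ β g σ)^2
      = (∑ S ∈ E₀.powerset, PIR E₀ β σ S * g S^2) - (Aop E₀ β g σ)^2 := by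
    intro σ
    have hexp : ∀ S ∈ E₀.powerset, PIR E₀ β σ S * (g S - Aop E₀ β g σ)^2
        = PIR E₀ β σ S * g S^2 - 2*(Aop E₀ β g σ)*(PIR E₀ β σ S * g S)
            + (Aop E₀ β g σ)^2 * PIR E₀ β σ S := fun S _ => by ring
    rw [Finset.sum_congr rfl hexp, Finset.sum_add_distrib, Finset.sum_sub_distrib,
      ← Finset.mul_sum, ← Finset.mul_sum, sum_PIR E₀ β σ]
    unfold Aop
    ring
  have hperσ : ∀ σ : V → Bool, (1/m) * ∑ e ∈ E₀, (β e)⁻¹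
        * ∑ T ∈ (E₀.erase e).powerset, PIR E₀ β σ (insert e T) * (g (insert e T) - g T)^2
      ≤ (∑ S ∈ E₀.powerset, PIR E₀ β σ S * g S^2) - (Aop E₀ β g σ)^2 := by
    intro σ
    rw [← hcen σ]
    have hone : ∀ e ∈ E₀, (β e)⁻¹ * ∑ T ∈ (E₀.erase e).powerset,
          PIR E₀ β σ (insert e T) * (g (insert e T) - g T)^2
        ≤ ∑ S ∈ E₀.powerset, PIR E₀ β σ S * (g S - Aop E₀ β g σ)^2 := by
      intro e he
      have := var_edge_bound E₀ β hβ σ he g (Aop E₀ β g σ)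
      calc (β e)⁻¹ * ∑ T ∈ (E₀.erase e).powerset,
            PIR E₀ β σ (insert e T) * (g (insert e T) - g T)^2
          = (β e)⁻¹ * ∑ T ∈ (E₀.erase e).powerset,
            PIR E₀ β σ (insert e T) * (g (insert e T) - g T)^2 := rfl
        _ ≤ ∑ S ∈ E₀.powerset, PIR E₀ β σ S * (g S - Aop E₀ β g σ)^2 := this
    have hsum : ∑ e ∈ E₀, (β e)⁻¹ * ∑ T ∈ (E₀.erase e).powerset,
          PIR E₀ β σ (insert e T) * (g (insert e T) - g T)^2
        ≤ m * ∑ S ∈ E₀.powerset, PIR E₀ β σ S * (g S - Aop E₀ β g σ)^2 := by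
      calc ∑ e ∈ E₀, (β e)⁻¹ * ∑ T ∈ (E₀.erase e).powerset,
            PIR E₀ β σ (insert e T) * (g (insert e T) - g T)^2
          ≤ ∑ _e ∈ E₀, ∑ S ∈ E₀.powerset, PIR E₀ β σ S * (g S - Aop E₀ β g σ)^2 :=
            Finset.sum_le_sum hone
        _ = m * ∑ S ∈ E₀.powerset, PIR E₀ β σ S * (g S - Aop E₀ β g σ)^2 := by
            rw [Finset.sum_const, nsmul_eq_mul, hmdef]
    calc (1/m) * ∑ e ∈ E₀, (β e)⁻¹ * ∑ T ∈ (E₀.erase e).powerset,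
          PIR E₀ β σ (insert e T) * (g (insert e T) - g T)^2
        ≤ (1/m) * (m * ∑ S ∈ E₀.powerset, PIR E₀ β σ S * (g S - Aop E₀ β g σ)^2) :=
          mul_le_mul_of_nonneg_left hsum (by positivity)
      _ = ∑ S ∈ E₀.powerset, PIR E₀ β σ S * (g S - Aop E₀ β g σ)^2 := by
          field_simp
  have hstep2 : Y ≤ (∑ S ∈ E₀.powerset, piWRC E₀ (fun e => 1 - (β e)⁻¹) lam S * g S^2)
      - ∑ σ : V → Bool, piIsing E₀ β lam σ * (Aop E₀ β g σ)^2 := by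
    have hrhs : (∑ S ∈ E₀.powerset, piWRC E₀ (fun e => 1 - (β e)⁻¹) lam S * g S^2)
        - ∑ σ : V → Bool, piIsing E₀ β lam σ * (Aop E₀ β g σ)^2
        = ∑ σ : V → Bool, piIsing E₀ β lam σ
            * ((∑ S ∈ E₀.powerset, PIR E₀ β σ S * g S^2) - (Aop E₀ β g σ)^2) := by
      rw [NR_eq E₀ β lam hβ hlam (fun S => g S^2), ← Finset.sum_sub_distrib]
      exact Finset.sum_congr rfl (fun σ _ => by ring)
    rw [hrhs]
    have hYσ : Y = ∑ σ : V → Bool, piIsing E₀ β lam σ * ((1/m) * ∑ e ∈ E₀, (β e)⁻¹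
        * ∑ T ∈ (E₀.erase e).powerset, PIR E₀ β σ (insert e T) * (g (insert e T) - g T)^2) := by
      rw [hY]
      have hswap : ∀ e ∈ E₀, (β e)⁻¹ * ∑ T ∈ (E₀.erase e).powerset,
            piWRC E₀ (fun e => 1 - (β e)⁻¹) lam (insert e T) * (g (insert e T) - g T)^2
          = ∑ σ : V → Bool, piIsing E₀ β lam σ * ((β e)⁻¹
              * ∑ T ∈ (E₀.erase e).powerset,
                PIR E₀ β σ (insert e T) * (g (insert e T) - g T)^2) := by
        intro e he
        have hmarg : ∀ T ∈ (E₀.erase e).powerset,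
            piWRC E₀ (fun e => 1 - (β e)⁻¹) lam (insert e T) * (g (insert e T) - g T)^2
            = ∑ σ : V → Bool, piIsing E₀ β lam σ * PIR E₀ β σ (insert e T)
                * (g (insert e T) - g T)^2 := by
          intro T hT
          rw [← Finset.sum_mul, marginal_piWRC E₀ β lam hβ hlam (hins_mem e he T hT)]
        rw [Finset.sum_congr rfl hmarg, Finset.sum_comm, Finset.mul_sum]
        refine Finset.sum_congr rfl (fun σ _ => ?_)
        rw [Finset.mul_sum, Finset.mul_sum, Finset.mul_sum]
        exact Finset.sum_congr rfl (fun T _ => by ring)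
      rw [Finset.mul_sum]
      calc ∑ e ∈ E₀, (1/m) * ((β e)⁻¹ * ∑ T ∈ (E₀.erase e).powerset,
              piWRC E₀ (fun e => 1 - (β e)⁻¹) lam (insert e T) * (g (insert e T) - g T)^2)
          = ∑ e ∈ E₀, (1/m) * ∑ σ : V → Bool, piIsing E₀ β lam σ * ((β e)⁻¹
              * ∑ T ∈ (E₀.erase e).powerset,
                PIR E₀ β σ (insert e T) * (g (insert e T) - g T)^2) := by
            refine Finset.sum_congr rfl (fun e he => ?_)
            rw [hswap e he]
        _ = ∑ e ∈ E₀, ∑ σ : V → Bool, (1/m) * (piIsing E₀ β lam σ * ((β e)⁻¹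
              * ∑ T ∈ (E₀.erase e).powerset,
                PIR E₀ β σ (insert e T) * (g (insert e T) - g T)^2)) :=
            Finset.sum_congr rfl (fun e _ => Finset.mul_sum _ _ _)
        _ = ∑ σ : V → Bool, ∑ e ∈ E₀, (1/m) * (piIsing E₀ β lam σ * ((β e)⁻¹
              * ∑ T ∈ (E₀.erase e).powerset,
                PIR E₀ β σ (insert e T) * (g (insert e T) - g T)^2)) :=
            Finset.sum_comm
        _ = ∑ σ : V → Bool, piIsing E₀ β lam σ * ((1/m) * ∑ e ∈ E₀, (β e)⁻¹
              * ∑ T ∈ (E₀.erase e).powerset,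
                PIR E₀ β σ (insert e T) * (g (insert e T) - g T)^2) := by
            refine Finset.sum_congr rfl (fun σ _ => ?_)
            rw [Finset.mul_sum, Finset.mul_sum]
            exact Finset.sum_congr rfl (fun e _ => by ring)
    rw [hYσ]
    refine Finset.sum_le_sum (fun σ _ => ?_)
    exact mul_le_mul_of_nonneg_left (hperσ σ) (piIsing_pos E₀ β lam hβ hlam σ).le
  exact le_trans hstep1 hstep2

end Model

end SWProof
namespace SWProof

variable {V : Type*} [Fintype V] [DecidableEq V]

lemma var_indicator {α : Type*} [DecidableEq α] (s : Finset α) (pi : α → ℝ) (a : α) (ha : a ∈ s) :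
    varOn s pi (fun x => if x = a then (1:ℝ) else 0) = pi a - (pi a)^2 := by
  unfold varOn
  have h1 : ∑ x ∈ s, pi x * (if x = a then (1:ℝ) else 0) ^ 2 = pi a := by
    rw [Finset.sum_eq_single_of_mem a ha]
    · simp
    · intro b hb hne
      simp [hne]
  have h2 : ∑ x ∈ s, pi x * (if x = a then (1:ℝ) else 0) = pi a := by
    rw [Finset.sum_eq_single_of_mem a ha]
    · simp
    · intro b hb hne
      simp [hne]
  rw [h1, h2]

lemma elem_lt_one {α : Type*} (s : Finset α) (pi : α → ℝ)
    (hnn : ∀ x ∈ s, 0 ≤ pi x) (h1 : ∑ x ∈ s, pi x = 1)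
    {a b : α} (ha : a ∈ s) (hb : b ∈ s) (hab : a ≠ b) (hbpos : 0 < pi b) : pi a < 1 := by
  have h2 : pi b ≤ ∑ x ∈ s.erase a, pi x :=
    Finset.single_le_sum (fun x hx => hnn x (Finset.mem_of_mem_erase hx))
      (Finset.mem_erase.2 ⟨fun h => hab h.symm, hb⟩)
  have h3 : pi a + ∑ x ∈ s.erase a, pi x = 1 := by
    rw [Finset.add_sum_erase _ pi ha]
    exact h1
  linarith

section Model

variable (E₀ : Finset (Sym2 V)) (β : Sym2 V → ℝ) (lam : V → ℝ)

lemma gapEF_facts (hβ : ∀ e ∈ E₀, 1 < β e) (hlam : ∀ v, 0 < lam v ∧ lam v ≤ 1)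
    (hm : E₀.Nonempty) :
    (∀ g : Finset (Sym2 V) → ℝ,
      gapOn E₀.powerset (piWRC E₀ (fun e => 1 - (β e)⁻¹) lam)
          (PEF E₀ (piWRC E₀ (fun e => 1 - (β e)⁻¹) lam))
        * varOn E₀.powerset (piWRC E₀ (fun e => 1 - (β e)⁻¹) lam) g
      ≤ dirichletOn E₀.powerset (piWRC E₀ (fun e => 1 - (β e)⁻¹) lam)
          (PEF E₀ (piWRC E₀ (fun e => 1 - (β e)⁻¹) lam)) g)
    ∧ gapOn E₀.powerset (piWRC E₀ (fun e => 1 - (β e)⁻¹) lam)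
        (PEF E₀ (piWRC E₀ (fun e => 1 - (β e)⁻¹) lam)) ≤ 1 := by
  set pi := piWRC E₀ (fun e => 1 - (β e)⁻¹) lam with hpi
  have hpos : ∀ S ∈ E₀.powerset, 0 < pi S :=
    fun S hS => piWRC_pos E₀ β lam hβ hlam (Finset.mem_powerset.1 hS)
  have hsum : ∑ S ∈ E₀.powerset, pi S = 1 := sum_piWRC E₀ β lam hβ hlam
  have hvarnn : ∀ g, 0 ≤ varOn E₀.powerset pi g :=
    fun g => varOn_nonneg _ _ _ (fun x hx => (hpos x hx).le) hsum
  have hBdd : BddBelow ((fun g : Finset (Sym2 V) → ℝ =>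
      dirichletOn E₀.powerset pi (PEF E₀ pi) g / varOn E₀.powerset pi g) ''
      {g | varOn E₀.powerset pi g ≠ 0}) := by
    refine ⟨0, fun r hr => ?_⟩
    obtain ⟨g, hg, rfl⟩ := hr
    exact div_nonneg (dirichlet_EF_nonneg E₀ pi hpos g) (hvarnn g)
  constructor
  · intro g
    by_cases hv : varOn E₀.powerset pi g = 0
    · rw [hv, mul_zero]
      exact dirichlet_EF_nonneg E₀ pi hpos g
    · have hvpos : 0 < varOn E₀.powerset pi g := lt_of_le_of_ne (hvarnn g) (Ne.symm hv)
      have hle : gapOn E₀.powerset pi (PEF E₀ pi)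
          ≤ dirichletOn E₀.powerset pi (PEF E₀ pi) g / varOn E₀.powerset pi g :=
        csInf_le hBdd ⟨g, hv, rfl⟩
      calc gapOn E₀.powerset pi (PEF E₀ pi) * varOn E₀.powerset pi g
          ≤ (dirichletOn E₀.powerset pi (PEF E₀ pi) g / varOn E₀.powerset pi g)
              * varOn E₀.powerset pi g := mul_le_mul_of_nonneg_right hle hvpos.le
        _ = dirichletOn E₀.powerset pi (PEF E₀ pi) g := div_mul_cancel₀ _ (ne_of_gt hvpos)
  · -- gap ≤ 1 via the indicator of ∅
    obtain ⟨e, he⟩ := hm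
    have hem : (∅ : Finset (Sym2 V)) ∈ E₀.powerset := Finset.mem_powerset.2 (Finset.empty_subset _)
    have hsing : ({e} : Finset (Sym2 V)) ∈ E₀.powerset := by
      rw [Finset.mem_powerset, Finset.singleton_subset_iff]; exact he
    have hne : (∅ : Finset (Sym2 V)) ≠ {e} := (Finset.singleton_ne_empty e).symm
    set g : Finset (Sym2 V) → ℝ := fun S => if S = ∅ then 1 else 0 with hgdef
    have hvar : varOn E₀.powerset pi g = pi ∅ - (pi ∅)^2 := var_indicator _ _ _ hem
    have hlt1 : pi ∅ < 1 := elem_lt_one _ _ (fun x hx => (hpos x hx).le) hsum hem hsing hne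
      (hpos _ hsing)
    have hvpos : 0 < varOn E₀.powerset pi g := by
      rw [hvar]
      nlinarith [hpos ∅ hem]
    have hratio : dirichletOn E₀.powerset pi (PEF E₀ pi) g / varOn E₀.powerset pi g ≤ 1 := by
      rw [div_le_one hvpos]
      exact dirichlet_EF_le_var E₀ pi hpos hsum g
    exact le_trans (csInf_le hBdd ⟨g, ne_of_gt hvpos, rfl⟩) hratio

set_option maxHeartbeats 1000000 in
/-- Main inequality: the SW Dirichlet form dominates `γ/3` times the variance. -/
lemma main_gap_ineq (hβ : ∀ e ∈ E₀, 1 < β e) (hlam : ∀ v, 0 < lam v ∧ lam v ≤ 1)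
    (hdiagAll : ∀ e ∈ E₀, ¬e.IsDiag) (hm : E₀.Nonempty) (f : (V → Bool) → ℝ) :
    (gapOn E₀.powerset (piWRC E₀ (fun e => 1 - (β e)⁻¹) lam)
        (PEF E₀ (piWRC E₀ (fun e => 1 - (β e)⁻¹) lam)) / 3)
      * varOn Finset.univ (piIsing E₀ β lam) f
    ≤ dirichletOn Finset.univ (piIsing E₀ β lam) (PSWIsing E₀ β lam) f := by
  obtain ⟨hγ1, hγle1⟩ := gapEF_facts E₀ β lam hβ hlam hm
  set γ := gapOn E₀.powerset (piWRC E₀ (fun e => 1 - (β e)⁻¹) lam)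
      (PEF E₀ (piWRC E₀ (fun e => 1 - (β e)⁻¹) lam)) with hγdef
  set M := ∑ σ : V → Bool, piIsing E₀ β lam σ * f σ with hM
  set h : (V → Bool) → ℝ := fun σ => f σ - M with hh
  set g : Finset (Sym2 V) → ℝ := fun S => Bop E₀ lam h S with hgdef
  set a := ∑ S ∈ E₀.powerset, piWRC E₀ (fun e => 1 - (β e)⁻¹) lam S * g S ^ 2 with ha
  set v := ∑ σ : V → Bool, piIsing E₀ β lam σ * h σ ^ 2 with hv
  set NA := ∑ σ : V → Bool, piIsing E₀ β lam σ * (Aop E₀ β g σ) ^ 2 with hNA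
  have hπI1 : ∑ σ : V → Bool, piIsing E₀ β lam σ = 1 := sum_piIsing E₀ β lam hβ hlam
  have hπR1 : ∑ S ∈ E₀.powerset, piWRC E₀ (fun e => 1 - (β e)⁻¹) lam S = 1 :=
    sum_piWRC E₀ β lam hβ hlam
  have hmean_h : ∑ σ : V → Bool, piIsing E₀ β lam σ * h σ = 0 := by
    have hexp : ∀ σ : V → Bool, piIsing E₀ β lam σ * h σ
        = piIsing E₀ β lam σ * f σ - M * piIsing E₀ β lam σ := fun σ => by
      rw [hh]; ring
    rw [Finset.sum_congr rfl (fun σ _ => hexp σ), Finset.sum_sub_distrib,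
      ← Finset.mul_sum, hπI1, ← hM]
    ring
  have hBopf : ∀ S ∈ E₀.powerset, Bop E₀ lam f S = g S + M := by
    intro S hS
    rw [hgdef]
    unfold Bop
    have hexp : ∀ τ : V → Bool, PRI E₀ lam S τ * f τ
        = PRI E₀ lam S τ * h τ + M * PRI E₀ lam S τ := fun τ => by
      rw [hh]; ring
    rw [Finset.sum_congr rfl (fun τ _ => hexp τ), Finset.sum_add_distrib, ← Finset.mul_sum,
      sum_PRI E₀ lam hlam (Finset.mem_powerset.1 hS), mul_one]
  have hNf : ∑ σ : V → Bool, piIsing E₀ β lam σ * f σ ^ 2 = v + M ^ 2 := by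
    have hexp : ∀ σ : V → Bool, piIsing E₀ β lam σ * f σ ^ 2
        = piIsing E₀ β lam σ * h σ ^ 2 + 2 * M * (piIsing E₀ β lam σ * h σ)
          + M ^ 2 * piIsing E₀ β lam σ := fun σ => by
      rw [hh]; ring
    rw [Finset.sum_congr rfl (fun σ _ => hexp σ), Finset.sum_add_distrib,
      Finset.sum_add_distrib, ← Finset.mul_sum, ← Finset.mul_sum, hmean_h, hπI1, ← hv]
    ring
  have hmean_g : ∑ S ∈ E₀.powerset, piWRC E₀ (fun e => 1 - (β e)⁻¹) lam S * g S = 0 := by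
    have hadj := adjoint_op E₀ β lam hβ hlam h (fun _ => 1)
    have hAone : ∀ σ : V → Bool, Aop E₀ β (fun _ => (1:ℝ)) σ = 1 := by
      intro σ
      unfold Aop
      simp only [mul_one]
      exact sum_PIR E₀ β σ
    simp only [hAone, mul_one] at hadj
    rw [hgdef]
    calc ∑ S ∈ E₀.powerset, piWRC E₀ (fun e => 1 - (β e)⁻¹) lam S * Bop E₀ lam h S
        = ∑ σ : V → Bool, piIsing E₀ β lam σ * h σ := hadj
      _ = 0 := hmean_h
  have hNBopf : ∑ S ∈ E₀.powerset, piWRC E₀ (fun e => 1 - (β e)⁻¹) lam S * (Bop E₀ lam f S) ^ 2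
      = a + M ^ 2 := by
    have hexp : ∀ S ∈ E₀.powerset, piWRC E₀ (fun e => 1 - (β e)⁻¹) lam S * (Bop E₀ lam f S) ^ 2
        = piWRC E₀ (fun e => 1 - (β e)⁻¹) lam S * g S ^ 2
          + 2 * M * (piWRC E₀ (fun e => 1 - (β e)⁻¹) lam S * g S)
          + M ^ 2 * piWRC E₀ (fun e => 1 - (β e)⁻¹) lam S := by
      intro S hS
      rw [hBopf S hS]; ring
    rw [Finset.sum_congr rfl hexp, Finset.sum_add_distrib, Finset.sum_add_distrib,
      ← Finset.mul_sum, ← Finset.mul_sum, hmean_g, hπR1, ← ha]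
    ring
  have hE : dirichletOn Finset.univ (piIsing E₀ β lam) (PSWIsing E₀ β lam) f = v - a := by
    rw [dirichlet_SWI E₀ β lam hβ hlam f, hNf, hNBopf]
    ring
  have hvar_f : varOn Finset.univ (piIsing E₀ β lam) f = v := by
    unfold varOn
    rw [hNf, ← hM]
    ring
  have ha0 : 0 ≤ a := by
    rw [ha]
    refine Finset.sum_nonneg (fun S hS => mul_nonneg ?_ (sq_nonneg _))
    exact (piWRC_pos E₀ β lam hβ hlam (Finset.mem_powerset.1 hS)).le
  have hv0 : 0 ≤ v := by
    rw [hv]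
    exact Finset.sum_nonneg (fun σ _ => mul_nonneg (piIsing_pos E₀ β lam hβ hlam σ).le
      (sq_nonneg _))
  have hvarg : varOn E₀.powerset (piWRC E₀ (fun e => 1 - (β e)⁻¹) lam) g = a := by
    unfold varOn
    rw [hmean_g, ← ha]
    ring
  have hstar := SW_dominates_EF E₀ β lam hβ hlam hdiagAll hm g
  have hEEF := hγ1 g
  rw [hvarg] at hEEF
  have hNAle : NA ≤ a - (γ/3) * a := by
    rw [hNA]
    have h1 : (1/3) * (γ * a) ≤ (1/3) * dirichletOn E₀.powerset
        (piWRC E₀ (fun e => 1 - (β e)⁻¹) lam)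
        (PEF E₀ (piWRC E₀ (fun e => 1 - (β e)⁻¹) lam)) g :=
      mul_le_mul_of_nonneg_left hEEF (by norm_num)
    have h2 := le_trans h1 hstar
    rw [← ha] at h2
    linarith
  have hadj2 : a = ∑ σ : V → Bool, piIsing E₀ β lam σ * h σ * Aop E₀ β g σ := by
    rw [← adjoint_op E₀ β lam hβ hlam h g, ha]
    refine Finset.sum_congr rfl (fun S _ => ?_)
    rw [hgdef]
    ring
  have hCS : a ^ 2 ≤ v * NA := by
    rw [hadj2]
    have := weighted_cs Finset.univ (piIsing E₀ β lam) h (fun σ => Aop E₀ β g σ)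
      (fun σ _ => (piIsing_pos E₀ β lam hβ hlam σ).le)
    rw [← hv] at this
    exact this
  rw [hE, hvar_f]
  rcases eq_or_lt_of_le ha0 with haz | hapos
  · -- a = 0
    rw [← haz]
    nlinarith [hγle1, hv0]
  · -- a > 0
    have hfin : a ≤ v * (1 - γ/3) := by
      have h3 : v * NA ≤ v * (a - (γ/3) * a) := mul_le_mul_of_nonneg_left hNAle hv0
      have h4 : a ^ 2 ≤ v * (a - (γ/3) * a) := le_trans hCS h3
      nlinarith [h4, hapos]
    nlinarith [hfin]

end Model

end SWProof
set_option maxHeartbeats 1000000 in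
/-- Comparison of the Swendsen-Wang dynamics for the Ising model and the edge-flipping
dynamics for the weighted random cluster model with `p_e = 1 − 1/β_e`:
`Gap(P_SW^Ising) ≥ Gap(P_EF)/3`. -/
theorem sw_ising_vs_edge_flip_gap {V : Type*} [Fintype V] [DecidableEq V]
    (G : SimpleGraph V) [DecidableRel G.Adj]
    (β : Sym2 V → ℝ) (lam : V → ℝ)
    (hβ : ∀ e ∈ G.edgeFinset, 1 < β e)
    (hlam : ∀ v : V, 0 < lam v ∧ lam v ≤ 1) :
    gapOn (Finset.univ : Finset (V → Bool)) (piIsing G.edgeFinset β lam)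
        (PSWIsing G.edgeFinset β lam) ≥
      gapOn G.edgeFinset.powerset (piWRC G.edgeFinset (fun e => 1 - (β e)⁻¹) lam)
        (PEF G.edgeFinset (piWRC G.edgeFinset (fun e => 1 - (β e)⁻¹) lam)) / 3 := by
  have hdiagAll : ∀ e ∈ G.edgeFinset, ¬e.IsDiag :=
    fun e he => G.not_isDiag_of_mem_edgeSet (SimpleGraph.mem_edgeFinset.1 he)
  have hπIpos := SWProof.piIsing_pos G.edgeFinset β lam hβ hlam
  have hπI1 := SWProof.sum_piIsing G.edgeFinset β lam hβ hlam
  have hvarnnI : ∀ f : (V → Bool) → ℝ,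
      0 ≤ varOn Finset.univ (piIsing G.edgeFinset β lam) f :=
    fun f => SWProof.varOn_nonneg _ _ _ (fun x _ => (hπIpos x).le) hπI1
  have hSWnn : ∀ f : (V → Bool) → ℝ,
      0 ≤ dirichletOn Finset.univ (piIsing G.edgeFinset β lam)
        (PSWIsing G.edgeFinset β lam) f := by
    intro f
    rw [SWProof.dirichlet_SWI G.edgeFinset β lam hβ hlam f]
    have := SWProof.NR_Bop_le G.edgeFinset β lam hβ hlam f
    linarith
  rcases Finset.eq_empty_or_nonempty G.edgeFinset with hE | hE
  · -- no edges: the edge-flip gap is an infimum over the empty set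
    have hzero : ∀ g : Finset (Sym2 V) → ℝ,
        varOn G.edgeFinset.powerset (piWRC G.edgeFinset (fun e => 1 - (β e)⁻¹) lam) g = 0 := by
      intro g
      unfold varOn
      rw [hE, Finset.powerset_empty, Finset.sum_singleton, Finset.sum_singleton]
      have hπ : piWRC (∅ : Finset (Sym2 V)) (fun e => 1 - (β e)⁻¹) lam ∅ = 1 := by
        unfold piWRC ZWRC
        rw [Finset.powerset_empty, Finset.sum_singleton]
        exact div_self (ne_of_gt (SWProof.wtWRC_pos ∅ β lam (by simp) hlam (by simp)))
      rw [hπ]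
      ring
    have hBempty : {g : Finset (Sym2 V) → ℝ |
        varOn G.edgeFinset.powerset (piWRC G.edgeFinset (fun e => 1 - (β e)⁻¹) lam) g ≠ 0}
        = ∅ := by
      ext g
      simp [hzero g]
    rw [ge_iff_le]
    unfold gapOn
    rw [hBempty, Set.image_empty, Real.sInf_empty, zero_div]
    refine Real.sInf_nonneg (fun r hr => ?_)
    obtain ⟨f, hf, rfl⟩ := hr
    exact div_nonneg (hSWnn f) (hvarnnI f)
  · rw [ge_iff_le]
    have hNV : Nonempty V := by
      obtain ⟨e, _⟩ := hE
      induction e with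
      | _ x y => exact ⟨x⟩
    obtain ⟨v0⟩ := hNV
    have hσne : (fun _ : V => false) ≠ (fun _ : V => true) := by
      intro h
      exact Bool.false_ne_true (congrFun h v0)
    have hf0 : varOn Finset.univ (piIsing G.edgeFinset β lam)
        (fun σ => if σ = (fun _ : V => false) then (1:ℝ) else 0) ≠ 0 := by
      rw [SWProof.var_indicator Finset.univ (piIsing G.edgeFinset β lam)
        (fun _ : V => false) (Finset.mem_univ _)]
      have hlt : piIsing G.edgeFinset β lam (fun _ : V => false) < 1 :=
        SWProof.elem_lt_one Finset.univ _ (fun x _ => (hπIpos x).le) hπI1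
          (Finset.mem_univ _) (Finset.mem_univ (fun _ : V => true)) hσne
          (hπIpos (fun _ : V => true))
      have hpos := hπIpos (fun _ : V => false)
      nlinarith
    unfold gapOn
    refine le_csInf ⟨_, ⟨(fun σ => if σ = (fun _ : V => false) then (1:ℝ) else 0), hf0, rfl⟩⟩ ?_
    rintro r ⟨f, hf, rfl⟩
    have hvpos : 0 < varOn Finset.univ (piIsing G.edgeFinset β lam) f :=
      lt_of_le_of_ne (hvarnnI f) (Ne.symm hf)
    rw [le_div_iff₀ hvpos]
    exact SWProof.main_gap_ineq G.edgeFinset β lam hβ hlam hdiagAll hE f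

end
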